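/- arXiv:1801.05999 — 4 statements merged into one kernel-verified Lean document; each statement's English description precedes it below -/
import Mathlib

section
/- Let f be a tempered distribution on ℝ^d, x₀ ∈ ℝ^d and ξ₀ ∈ ℝ^d \ {0}. Suppose there exist a compact neighbourhood K₁ of x₀ and a cone neighbourhood Γ of ξ₀ such that for every n ∈ ℕ and every compactly supported smooth χ : ℝ^d → ℂ with support in K₁ there is C_{n,χ} > 0 with |F(χf)(ξ)| ≤ C_{n,χ}(1+|ξ|)^{-n} for all ξ ∈ Γ. Then there exists a compact neighbourhood K of x₀ (one may take K with K + (K − {x₀}) ⊆ K₁, e.g. a closed ball of half the radius) such that for each n ∈ ℕ there exist C_n > 0 and k_n ∈ ℕ with |V_χ f(x,ξ)| ≤ C_n · sup_{|α| ≤ k_n} ‖D^α χ‖_{L^∞(ℝ^d)} · (1+|ξ|)^{-n} for all x ∈ K, all ξ ∈ Γ, and all compactly supported smooth χ with support contained in K − {x₀} := {y ∈ ℝ^d : y + x₀ ∈ K}. (Theorem 1.1, (ii) ⇒ (iii).) -/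
set_option maxHeartbeats 1000000

open MeasureTheory Complex
open scoped ContDiff InnerProductSpace ENNReal RealInnerProductSpace

section AuxMine

open Filter Function

section Aux

variable {E F : Type*} [NormedAddCommGroup E] [NormedSpace ℝ E]
  [NormedAddCommGroup F] [NormedSpace ℝ F]

/-- A compactly supported smooth function has temperate growth. -/
lemma hasTemperateGrowth_of_hasCompactSupport {g : E → F}
    (hg : ContDiff ℝ ∞ g) (hgc : HasCompactSupport g) : Function.HasTemperateGrowth g := by
  refine ⟨hg, fun n => ?_⟩
  obtain ⟨C, hC⟩ := (hgc.iteratedFDeriv (𝕜 := ℝ) n).exists_bound_of_continuous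
    (hg.continuous_iteratedFDeriv (mod_cast le_top))
  refine ⟨0, C, fun x => ?_⟩
  simpa using hC x

lemma iteratedFDeriv_comp_sub_aux {χ : E → F} (hχ : ContDiff ℝ ∞ χ) (x : E) (b : ℕ) (t : E) :
    iteratedFDeriv ℝ b (fun s => χ (s - x)) t = iteratedFDeriv ℝ b χ (t - x) := by
  have hχ' := contDiff_iff_ftaylorSeries.mp hχ
  have H : HasFTaylorSeriesUpTo ((⊤ : ℕ∞) : WithTop ℕ∞) (fun s => χ (s - x))
      (fun s => ftaylorSeries ℝ χ (s - x)) := by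
    rw [hasFTaylorSeriesUpTo_top_iff' le_rfl]
    constructor
    · intro s
      exact hχ'.zero_eq _
    · intro m s
      have h1 := hχ'.fderiv m (by exact_mod_cast lt_top_iff_ne_top.mpr (by simp)) (s - x)
      have h2 : HasFDerivAt (fun y : E => y - x) (ContinuousLinearMap.id ℝ E) s :=
        (hasFDerivAt_id s).sub_const x
      simpa [Function.comp_def] using h1.comp s h2
  exact (H.eq_iteratedFDeriv (m := b) (mod_cast le_top) t).symm

lemma iteratedFDeriv_sub_apply' {i : ℕ} {f g : E → F} (hf : ContDiff ℝ i f)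
    (hg : ContDiff ℝ i g) (x : E) :
    iteratedFDeriv ℝ i (f - g) x = iteratedFDeriv ℝ i f x - iteratedFDeriv ℝ i g x := by
  have h1 : iteratedFDeriv ℝ i (f + -g) x =
      iteratedFDeriv ℝ i f x + iteratedFDeriv ℝ i (-g) x :=
    iteratedFDeriv_add_apply hf.contDiffAt hg.neg.contDiffAt
  have h2 : f - g = f + -g := sub_eq_add_neg f g
  rw [h2, h1, iteratedFDeriv_neg_apply, ← sub_eq_add_neg]

end Aux

section Complete

variable {E F : Type*} [NormedAddCommGroup E] [NormedSpace ℝ E]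
  [NormedAddCommGroup F] [NormedSpace ℝ F]

instance schwartz_uniformity_countably_generated :
    (uniformity (SchwartzMap E F)).IsCountablyGenerated := by
  rw [uniformity_eq_comap_nhds_zero]
  infer_instance

variable [CompleteSpace F]

omit [CompleteSpace F] in
theorem schwartz_cauchySeq_seminorm {u : ℕ → SchwartzMap E F} (hu : CauchySeq u)
    (k n : ℕ) {ε : ℝ} (hε : 0 < ε) :
    ∃ N : ℕ, ∀ j ≥ N, ∀ l ≥ N, SchwartzMap.seminorm ℝ k n (u j - u l) < ε := by
  have h2 := hu.2
  rw [uniformity_eq_comap_nhds_zero, ← Filter.map_le_iff_le_comap,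
    Filter.prod_map_map_eq', Filter.prod_atTop_atTop_eq] at h2
  have h3 : Tendsto (fun q : ℕ × ℕ => u q.2 - u q.1) atTop (nhds 0) := h2
  have h4 : Tendsto (fun q : ℕ × ℕ => SchwartzMap.seminorm ℝ k n (u q.2 - u q.1))
      atTop (nhds 0) := by
    have hc := (schwartz_withSeminorms ℝ E F).continuous_seminorm (k, n)
    have := (hc.tendsto 0).comp h3
    simpa [Function.comp_def] using this
  have h5 : ∀ᶠ q : ℕ × ℕ in atTop, SchwartzMap.seminorm ℝ k n (u q.2 - u q.1) < ε :=
    h4 (Iio_mem_nhds hε)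
  obtain ⟨a, ha⟩ := eventually_atTop.mp h5
  refine ⟨max a.1 a.2, fun j hj l hl => ?_⟩
  exact ha (l, j) ⟨le_trans (le_max_left _ _) hl, le_trans (le_max_right _ _) hj⟩

instance schwartz_completeSpace : CompleteSpace (SchwartzMap E F) := by
  refine UniformSpace.complete_of_cauchySeq_tendsto (fun u hu => ?_)
  have key : ∀ (k n : ℕ) (ε : ℝ), 0 < ε → ∃ N : ℕ, ∀ j ≥ N, ∀ l ≥ N,
      SchwartzMap.seminorm ℝ k n (u j - u l) < ε := fun k n ε hε =>
    schwartz_cauchySeq_seminorm hu k n hε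
  have hcoesub : ∀ j l : ℕ, ⇑(u j - u l) = ⇑(u j) - ⇑(u l) := fun j l => rfl
  have hsm : ∀ (j : ℕ) (i : ℕ), ContDiff ℝ i (u j) := fun j i => (u j).smooth i
  have hdiff : ∀ (nn j l : ℕ) (x : E),
      iteratedFDeriv ℝ nn (u j) x - iteratedFDeriv ℝ nn (u l) x
        = iteratedFDeriv ℝ nn (⇑(u j - u l)) x := by
    intro nn j l x
    rw [hcoesub, iteratedFDeriv_sub_apply' (hsm j nn) (hsm l nn)]
  have cauG : ∀ (nn : ℕ) (x : E), CauchySeq (fun j => iteratedFDeriv ℝ nn (u j) x) := by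
    intro nn x
    rw [Metric.cauchySeq_iff]
    intro ε hε
    obtain ⟨N, hN⟩ := key 0 nn ε hε
    refine ⟨N, fun j hj l hl => ?_⟩
    rw [dist_eq_norm]
    calc ‖iteratedFDeriv ℝ nn (u j) x - iteratedFDeriv ℝ nn (u l) x‖
        = ‖iteratedFDeriv ℝ nn (⇑(u j - u l)) x‖ := by rw [hdiff]
      _ ≤ SchwartzMap.seminorm ℝ 0 nn (u j - u l) :=
          SchwartzMap.norm_iteratedFDeriv_le_seminorm ℝ _ nn x
      _ < ε := hN j hj l hl
  let g : (nn : ℕ) → E → ContinuousMultilinearMap ℝ (fun _ : Fin nn => E) F :=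
    fun nn x => limUnder atTop (fun j => iteratedFDeriv ℝ nn (u j) x)
  have hg : ∀ (nn : ℕ) (x : E),
      Tendsto (fun j => iteratedFDeriv ℝ nn (u j) x) atTop (nhds (g nn x)) :=
    fun nn x => (cauG nn x).tendsto_limUnder
  have hlimb : ∀ (k nn : ℕ) (x : E) (j : ℕ) (c : ℝ) (N : ℕ), j ≥ N →
      (∀ l ≥ N, SchwartzMap.seminorm ℝ k nn (u j - u l) ≤ c) →
      ‖x‖ ^ k * ‖iteratedFDeriv ℝ nn (u j) x - g nn x‖ ≤ c := by
    intro k nn x j c N hj hc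
    have htend : Tendsto (fun l => ‖x‖ ^ k * ‖iteratedFDeriv ℝ nn (u j) x
        - iteratedFDeriv ℝ nn (u l) x‖) atTop
        (nhds (‖x‖ ^ k * ‖iteratedFDeriv ℝ nn (u j) x - g nn x‖)) :=
      tendsto_const_nhds.mul ((tendsto_const_nhds.sub (hg nn x)).norm)
    refine le_of_tendsto htend (eventually_atTop.mpr ⟨N, fun l hl => ?_⟩)
    calc ‖x‖ ^ k * ‖iteratedFDeriv ℝ nn (u j) x - iteratedFDeriv ℝ nn (u l) x‖
        = ‖x‖ ^ k * ‖iteratedFDeriv ℝ nn (⇑(u j - u l)) x‖ := by rw [hdiff]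
      _ ≤ SchwartzMap.seminorm ℝ k nn (u j - u l) := SchwartzMap.le_seminorm ℝ k nn _ x
      _ ≤ c := hc l hl
  have hunif : ∀ nn : ℕ,
      TendstoUniformly (fun j x => iteratedFDeriv ℝ nn (u j) x) (g nn) atTop := by
    intro nn
    rw [Metric.tendstoUniformly_iff]
    intro ε hε
    obtain ⟨N, hN⟩ := key 0 nn (ε/2) (half_pos hε)
    refine eventually_atTop.mpr ⟨N, fun j hj x => ?_⟩
    have h6 : ‖x‖ ^ 0 * ‖iteratedFDeriv ℝ nn (u j) x - g nn x‖ ≤ ε/2 :=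
      hlimb 0 nn x j (ε/2) N hj (fun l hl => (hN j hj l hl).le)
    rw [pow_zero, one_mul] at h6
    rw [dist_comm, dist_eq_norm]
    linarith
  let p : E → FormalMultilinearSeries ℝ E F := fun x nn => g nn x
  let gfun : E → F := fun x => (p x 0).curry0
  have husm : ∀ j : ℕ, HasFTaylorSeriesUpTo ((⊤ : ℕ∞) : WithTop ℕ∞) (u j)
      (ftaylorSeries ℝ (u j)) := fun j => contDiff_iff_ftaylorSeries.mp ((u j).smooth')
  have hTaylor : HasFTaylorSeriesUpTo ((⊤ : ℕ∞) : WithTop ℕ∞) gfun p := by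
    rw [hasFTaylorSeriesUpTo_top_iff' le_rfl]
    refine ⟨fun x => rfl, fun m x => ?_⟩
    have hf : ∀ (j : ℕ) (y : E), HasFDerivAt (fun z => iteratedFDeriv ℝ m (u j) z)
        ((iteratedFDeriv ℝ (m + 1) (u j) y).curryLeft) y := by
      intro j y
      exact (husm j).fderiv m (by exact_mod_cast lt_top_iff_ne_top.mpr (by simp)) y
    have hf' : TendstoUniformly (fun (j : ℕ) (y : E) =>
        (iteratedFDeriv ℝ (m + 1) (u j) y).curryLeft)
        (fun y => (g (m + 1) y).curryLeft) atTop := by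
      exact (continuousMultilinearCurryLeftEquiv ℝ (fun _ : Fin (m + 1) => E)
        F).isometry.uniformContinuous.comp_tendstoUniformly (hunif (m + 1))
    exact hasFDerivAt_of_tendstoUniformly hf' hf (hg m) x
  have hsmooth : ContDiff ℝ ∞ gfun := HasFTaylorSeriesUpTo.contDiff (n := (⊤ : ℕ∞)) hTaylor
  have hiter : ∀ (nn : ℕ) (x : E), iteratedFDeriv ℝ nn gfun x = g nn x :=
    fun nn x => (hTaylor.eq_iteratedFDeriv (mod_cast le_top) x).symm
  have hdecay : ∀ k nn : ℕ, ∃ C : ℝ, ∀ x, ‖x‖ ^ k * ‖iteratedFDeriv ℝ nn gfun x‖ ≤ C := by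
    intro k nn
    obtain ⟨N, hN⟩ := key k nn 1 one_pos
    refine ⟨SchwartzMap.seminorm ℝ k nn (u N) + 1, fun x => ?_⟩
    have h7 : ‖x‖ ^ k * ‖iteratedFDeriv ℝ nn (u N) x - g nn x‖ ≤ 1 :=
      hlimb k nn x N 1 N le_rfl (fun l hl => (hN N le_rfl l hl).le)
    have h8 : ‖x‖ ^ k * ‖iteratedFDeriv ℝ nn (u N) x‖ ≤ SchwartzMap.seminorm ℝ k nn (u N) :=
      SchwartzMap.le_seminorm ℝ k nn (u N) x
    have h9 : ‖g nn x‖ ≤ ‖iteratedFDeriv ℝ nn (u N) x‖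
        + ‖iteratedFDeriv ℝ nn (u N) x - g nn x‖ := by
      calc ‖g nn x‖ = ‖iteratedFDeriv ℝ nn (u N) x
            - (iteratedFDeriv ℝ nn (u N) x - g nn x)‖ := by rw [sub_sub_cancel]
        _ ≤ _ := norm_sub_le _ _
    have hxk : (0 : ℝ) ≤ ‖x‖ ^ k := by positivity
    rw [hiter]
    calc ‖x‖ ^ k * ‖g nn x‖
        ≤ ‖x‖ ^ k * (‖iteratedFDeriv ℝ nn (u N) x‖
            + ‖iteratedFDeriv ℝ nn (u N) x - g nn x‖) := by gcongr
      _ = ‖x‖ ^ k * ‖iteratedFDeriv ℝ nn (u N) x‖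
            + ‖x‖ ^ k * ‖iteratedFDeriv ℝ nn (u N) x - g nn x‖ := by ring
      _ ≤ SchwartzMap.seminorm ℝ k nn (u N) + 1 := add_le_add h8 h7
  refine ⟨⟨gfun, hsmooth, hdecay⟩, ?_⟩
  rw [(schwartz_withSeminorms ℝ E F).tendsto_nhds u _]
  rintro ⟨k, nn⟩ ε hε
  obtain ⟨N, hN⟩ := key k nn (ε/2) (half_pos hε)
  refine eventually_atTop.mpr ⟨N, fun j hj => ?_⟩
  have hb : SchwartzMap.seminorm ℝ k nn (u j - ⟨gfun, hsmooth, hdecay⟩) ≤ ε/2 := by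
    apply SchwartzMap.seminorm_le_bound ℝ k nn _ (le_of_lt (half_pos hε))
    intro x
    have hco : ⇑(u j - (⟨gfun, hsmooth, hdecay⟩ : SchwartzMap E F)) = ⇑(u j) - gfun := rfl
    rw [hco, iteratedFDeriv_sub_apply' (hsm j nn) (hsmooth.of_le (mod_cast le_top)), hiter]
    exact hlimb k nn x j (ε/2) N hj (fun l hl => (hN j hj l hl).le)
  calc schwartzSeminormFamily ℝ E F (k, nn) (u j - ⟨gfun, hsmooth, hdecay⟩) ≤ ε/2 := hb
    _ < ε := by linarith

instance schwartz_baireSpace : BaireSpace (SchwartzMap E F) :=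
  BaireSpace.of_completelyPseudoMetrizable

instance schwartz_barrelledSpace : BarrelledSpace ℝ (SchwartzMap E F) :=
  BaireSpace.instBarrelledSpace

end Complete

end AuxMine

variable {d : ℕ}

/-- A compactly supported smooth function is a Schwartz function. -/
noncomputable def toSchwartz (g : EuclideanSpace ℝ (Fin d) → ℂ)
    (hg : ContDiff ℝ ∞ g) (hgc : HasCompactSupport g) :
    SchwartzMap (EuclideanSpace ℝ (Fin d)) ℂ where
  toFun := g
  smooth' := hg
  decay' := by
    intro k n
    have h1 : HasCompactSupport fun x : EuclideanSpace ℝ (Fin d) =>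
        ‖x‖ ^ k • iteratedFDeriv ℝ n g x := by
      apply (hgc.iteratedFDeriv (𝕜 := ℝ) n).mono
      intro x hx
      simp only [Function.mem_support] at hx ⊢
      intro h
      exact hx (by rw [h, smul_zero])
    obtain ⟨C, hC⟩ := h1.exists_bound_of_continuous
      ((continuous_norm.pow k).smul (hg.continuous_iteratedFDeriv (mod_cast le_top)))
    refine ⟨C, fun x => ?_⟩
    have := hC x
    rwa [norm_smul, norm_pow, norm_norm] at this

/-- The Fourier transform of `χ f` at `ξ`, i.e. `⟨f, t ↦ e^{-i⟨ξ,t⟩} χ(t)⟩`. -/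
noncomputable def FT (f : SchwartzMap (EuclideanSpace ℝ (Fin d)) ℂ →L[ℂ] ℂ)
    (χ : EuclideanSpace ℝ (Fin d) → ℂ) (hχ : ContDiff ℝ ∞ χ) (hχc : HasCompactSupport χ)
    (ξ : EuclideanSpace ℝ (Fin d)) : ℂ :=
  f (toSchwartz (fun t => Complex.exp (-(⟪ξ, t⟫ : ℝ) * Complex.I) * χ t)
      (((((Complex.ofRealCLM.contDiff.comp (innerSL ℝ ξ).contDiff).neg.mul
        contDiff_const).cexp)).mul hχ)
      hχc.mul_left)

/-- The short-time Fourier transform `V_χ f (x, ξ) = ⟨f, t ↦ e^{-i⟨ξ,t⟩} conj (χ (t - x))⟩`. -/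
noncomputable def STFT (f : SchwartzMap (EuclideanSpace ℝ (Fin d)) ℂ →L[ℂ] ℂ)
    (χ : EuclideanSpace ℝ (Fin d) → ℂ) (hχ : ContDiff ℝ ∞ χ) (hχc : HasCompactSupport χ)
    (x ξ : EuclideanSpace ℝ (Fin d)) : ℂ :=
  FT f (fun t => (starRingEnd ℂ) (χ (t - x)))
    ((Complex.conjCLE.contDiff).comp (hχ.comp (contDiff_id.sub contDiff_const)))
    ((hχc.comp_left (g := starRingEnd ℂ) (map_zero _)).comp_isClosedEmbedding
      (Homeomorph.subRight x).isClosedEmbedding)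
    ξ

/-- A cone neighbourhood of `ξ₀`. -/
def IsConeNbhd (Γ : Set (EuclideanSpace ℝ (Fin d))) (ξ₀ : EuclideanSpace ℝ (Fin d)) : Prop :=
  IsOpen Γ ∧ ξ₀ ∈ Γ ∧ (0 : EuclideanSpace ℝ (Fin d)) ∉ Γ ∧
    ∀ ξ ∈ Γ, ∀ t : ℝ, 0 < t → t • ξ ∈ Γ

/-- A cone in `ℝ^d \ {0}`. -/
def IsCone (Γ : Set (EuclideanSpace ℝ (Fin d))) : Prop :=
  (0 : EuclideanSpace ℝ (Fin d)) ∉ Γ ∧ ∀ ξ ∈ Γ, ∀ t : ℝ, 0 < t → t • ξ ∈ Γ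

/-- `sup_{|α| ≤ k} ‖D^α χ‖_{L^∞(ℝ^d)}`, formalised via iterated Fréchet derivatives. -/
noncomputable def supNorm (k : ℕ) (χ : EuclideanSpace ℝ (Fin d) → ℂ) : ℝ :=
  (Finset.range (k + 1)).sup' (by simp) fun i => ⨆ x, ‖iteratedFDeriv ℝ i χ x‖

/-- `sup_{|α| ≤ k} ‖D^α χ‖_{L^∞(K)}`. -/
noncomputable def supNormOn (K : Set (EuclideanSpace ℝ (Fin d))) (k : ℕ)
    (χ : EuclideanSpace ℝ (Fin d) → ℂ) : ℝ :=
  (Finset.range (k + 1)).sup' (by simp) fun i => ⨆ x : K, ‖iteratedFDeriv ℝ i χ (x : EuclideanSpace ℝ (Fin d))‖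

/-- `∫_Γ ⟨ξ⟩^{2s} |g(ξ)|² dξ`, where `⟨ξ⟩^{2s} = (1+|ξ|²)^s`. -/
noncomputable def sqIntCone (s : ℝ) (Γ : Set (EuclideanSpace ℝ (Fin d)))
    (g : EuclideanSpace ℝ (Fin d) → ℂ) : ℝ≥0∞ :=
  ∫⁻ ξ in Γ, ENNReal.ofReal ((1 + ‖ξ‖ ^ 2) ^ s) * (‖g ξ‖₊ : ℝ≥0∞) ^ 2

/-- `‖⟨·⟩^s g‖_{L²(Γ)}`. -/
noncomputable def l2Cone (s : ℝ) (Γ : Set (EuclideanSpace ℝ (Fin d)))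
    (g : EuclideanSpace ℝ (Fin d) → ℂ) : ℝ≥0∞ :=
  sqIntCone s Γ g ^ (1 / 2 : ℝ)

/-- Theorem 1.1, (ii) ⇒ (iii). -/
theorem stmt1 {d : ℕ} (f : SchwartzMap (EuclideanSpace ℝ (Fin d)) ℂ →L[ℂ] ℂ)
    (x₀ ξ₀ : EuclideanSpace ℝ (Fin d)) (hξ₀ : ξ₀ ≠ 0)
    (K₁ : Set (EuclideanSpace ℝ (Fin d))) (hK₁ : IsCompact K₁) (hK₁x₀ : K₁ ∈ nhds x₀)
    (Γ : Set (EuclideanSpace ℝ (Fin d))) (hΓ : IsConeNbhd Γ ξ₀)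
    (hdecay : ∀ (n : ℕ) (χ : EuclideanSpace ℝ (Fin d) → ℂ) (hχ : ContDiff ℝ ∞ χ) (hχc : HasCompactSupport χ),
      tsupport χ ⊆ K₁ →
      ∃ C > (0 : ℝ), ∀ ξ ∈ Γ, ‖FT f χ hχ hχc ξ‖ ≤ C * (1 + ‖ξ‖) ^ (-(n : ℝ))) :
    ∃ K : Set (EuclideanSpace ℝ (Fin d)), IsCompact K ∧ K ∈ nhds x₀ ∧
      ∀ n : ℕ, ∃ C > (0 : ℝ), ∃ k : ℕ,
        ∀ (χ : EuclideanSpace ℝ (Fin d) → ℂ) (hχ : ContDiff ℝ ∞ χ) (hχc : HasCompactSupport χ),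
          tsupport χ ⊆ {y : EuclideanSpace ℝ (Fin d) | y + x₀ ∈ K} →
          ∀ x ∈ K, ∀ ξ ∈ Γ,
            ‖STFT f χ hχ hχc x ξ‖ ≤ C * supNorm k χ * (1 + ‖ξ‖) ^ (-(n : ℝ)) := by
  classical
  obtain ⟨r, hr0, hrK⟩ := Metric.nhds_basis_closedBall.mem_iff.mp hK₁x₀
  haveI : Nonempty ↥Γ := ⟨⟨ξ₀, hΓ.2.1⟩⟩
  refine ⟨Metric.closedBall x₀ (r/4), isCompact_closedBall _ _,
    Metric.closedBall_mem_nhds _ (by positivity), fun n => ?_⟩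
  -- bump function
  set B : ContDiffBump x₀ := ⟨r/2, r, by positivity, by linarith⟩ with hBdef
  set ψ : EuclideanSpace ℝ (Fin d) → ℂ := fun t => ((B t : ℝ) : ℂ) with hψdef
  have hψs : ContDiff ℝ ∞ ψ := Complex.ofRealCLM.contDiff.comp B.contDiff
  have hψc : HasCompactSupport ψ :=
    B.hasCompactSupport.comp_left (g := fun a : ℝ => (a : ℂ)) (by simp)
  have hψ1 : ∀ t, dist t x₀ ≤ r/2 → ψ t = 1 := by
    intro t ht
    have h := B.one_of_mem_closedBall (Metric.mem_closedBall.mpr ht)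
    show ((B t : ℝ) : ℂ) = 1
    rw [h, Complex.ofReal_one]
  have hψsupp : tsupport ψ ⊆ K₁ := by
    refine subset_trans ?_ hrK
    have h1 : Function.support ψ ⊆ Metric.ball x₀ r := by
      refine subset_trans (Function.support_comp_subset Complex.ofReal_zero _) ?_
      rw [B.support_eq]
    exact subset_trans (closure_mono h1) Metric.closure_ball_subset_closedBall
  -- multiplier
  have hmts : ∀ ξ : EuclideanSpace ℝ (Fin d), ContDiff ℝ ∞
      (fun t => Complex.exp (-(⟪ξ, t⟫ : ℝ) * Complex.I) * ψ t) := fun ξ =>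
    ((((Complex.ofRealCLM.contDiff.comp (innerSL ℝ ξ).contDiff).neg.mul
      contDiff_const).cexp)).mul hψs
  have hmtc : ∀ ξ : EuclideanSpace ℝ (Fin d),
      HasCompactSupport (fun t => Complex.exp (-(⟪ξ, t⟫ : ℝ) * Complex.I) * ψ t) :=
    fun ξ => hψc.mul_left
  have hmt : ∀ ξ : EuclideanSpace ℝ (Fin d), Function.HasTemperateGrowth
      (fun t => Complex.exp (-(⟪ξ, t⟫ : ℝ) * Complex.I) * ψ t) :=
    fun ξ => hasTemperateGrowth_of_hasCompactSupport (hmts ξ) (hmtc ξ)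
  set P : EuclideanSpace ℝ (Fin d) →
      (SchwartzMap (EuclideanSpace ℝ (Fin d)) ℂ →L[ℝ] SchwartzMap (EuclideanSpace ℝ (Fin d)) ℂ) :=
    fun ξ => SchwartzMap.bilinLeftCLM (ContinuousLinearMap.mul ℝ ℂ) (hmt ξ) with hPdef
  set T : ↥Γ → (SchwartzMap (EuclideanSpace ℝ (Fin d)) ℂ →L[ℝ] ℂ) :=
    fun ξ => ((1 + ‖(ξ : EuclideanSpace ℝ (Fin d))‖) ^ n : ℝ) •
      ((f.restrictScalars ℝ).comp (P ξ)) with hTdef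
  -- pointwise boundedness
  have hbdd : ∀ (k : Fin 1) (g : SchwartzMap (EuclideanSpace ℝ (Fin d)) ℂ),
      BddAbove (Set.range fun ξ : ↥Γ =>
        (fun _ : Fin 1 => normSeminorm ℝ ℂ) k ((T ξ) g)) := by
    intro k g
    set χg : EuclideanSpace ℝ (Fin d) → ℂ := fun t => ψ t * g t with hχgdef
    have hχs : ContDiff ℝ ∞ χg := hψs.mul g.smooth'
    have hχc : HasCompactSupport χg := hψc.mul_right
    have hχsupp : tsupport χg ⊆ K₁ :=
      subset_trans (closure_mono (Function.support_mul_subset_left _ _)) hψsupp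
    obtain ⟨C, hC0, hC⟩ := hdecay n χg hχs hχc hχsupp
    refine ⟨C, ?_⟩
    rintro y ⟨ξ, rfl⟩
    have hkey : P (ξ : EuclideanSpace ℝ (Fin d)) g = toSchwartz
        (fun t => Complex.exp (-(⟪(ξ : EuclideanSpace ℝ (Fin d)), t⟫ : ℝ) * Complex.I) * χg t)
        (((((Complex.ofRealCLM.contDiff.comp
          (innerSL ℝ (ξ : EuclideanSpace ℝ (Fin d))).contDiff).neg.mul
          contDiff_const).cexp)).mul hχs)
        hχc.mul_left := by
      apply SchwartzMap.ext
      intro t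
      show g t * (Complex.exp _ * ψ t) = Complex.exp _ * (ψ t * g t)
      ring
    have h2 : f (P (ξ : EuclideanSpace ℝ (Fin d)) g)
        = FT f χg hχs hχc (ξ : EuclideanSpace ℝ (Fin d)) := by
      rw [hkey]; rfl
    have h1 := hC (ξ : EuclideanSpace ℝ (Fin d)) ξ.2
    have hpos : (0:ℝ) < (1 + ‖(ξ : EuclideanSpace ℝ (Fin d))‖) ^ n := by positivity
    show ‖(T ξ) g‖ ≤ C
    have hTnorm : ‖(T ξ) g‖ = (1 + ‖(ξ : EuclideanSpace ℝ (Fin d))‖) ^ n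
        * ‖f (P (ξ : EuclideanSpace ℝ (Fin d)) g)‖ := by
      show ‖((1 + ‖(ξ : EuclideanSpace ℝ (Fin d))‖) ^ n : ℝ) •
        ((f.restrictScalars ℝ).comp (P (ξ : EuclideanSpace ℝ (Fin d)))) g‖ = _
      rw [norm_smul, Real.norm_eq_abs, abs_of_pos hpos]
      rfl
    rw [hTnorm, h2]
    calc (1 + ‖(ξ : EuclideanSpace ℝ (Fin d))‖) ^ n * ‖FT f χg hχs hχc _‖
        ≤ (1 + ‖(ξ : EuclideanSpace ℝ (Fin d))‖) ^ n
          * (C * (1 + ‖(ξ : EuclideanSpace ℝ (Fin d))‖) ^ (-(n:ℝ))) := by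
          exact mul_le_mul_of_nonneg_left h1 hpos.le
      _ = C := by
          rw [Real.rpow_neg (by positivity), Real.rpow_natCast]
          field_simp
  have hequi : UniformEquicontinuous (DFunLike.coe ∘ T) :=
    (norm_withSeminorms ℝ ℂ).banach_steinhaus hbdd
  have hequi' : UniformEquicontinuous
      (DFunLike.coe ∘ fun ξ : ↥Γ => (T ξ).toLinearMap) := hequi
  rw [WithSeminorms.uniformEquicontinuous_iff_exists_continuous_seminorm
    (norm_withSeminorms ℝ ℂ) (fun ξ : ↥Γ => (T ξ).toLinearMap)] at hequi'
  obtain ⟨q, hqc, hqb⟩ := hequi' 0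
  obtain ⟨s, C, hC0, hCq⟩ := Seminorm.bound_of_continuous
    (schwartz_withSeminorms ℝ (EuclideanSpace ℝ (Fin d)) ℂ) q hqc
  set kmax := s.sup (fun i => i.1) with hkmaxdef
  set kk := s.sup (fun i => i.2) with hkkdef
  set R : ℝ := 1 + ‖x₀‖ + r with hRdef
  have hR1 : (1:ℝ) ≤ R := by
    have := norm_nonneg x₀
    rw [hRdef]; linarith
  have hR0 : (0:ℝ) ≤ R := by linarith
  have hCpos : (0:ℝ) < (C:ℝ) := by
    have : (0 : NNReal) < C := pos_iff_ne_zero.mpr hC0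
    exact_mod_cast this
  refine ⟨(C:ℝ) * R ^ kmax, by positivity, kk, ?_⟩
  intro χ hχ hχc hχsupp x hx ξ hξ
  have hsuppball : tsupport χ ⊆ Metric.closedBall 0 (r/4) := by
    intro y hy
    have h3 := hχsupp hy
    simp only [Set.mem_setOf_eq, Metric.mem_closedBall, dist_eq_norm,
      add_sub_cancel_right] at h3
    simpa [Metric.mem_closedBall, dist_eq_norm] using h3
  have hxball : ‖x - x₀‖ ≤ r/4 := by
    simpa [Metric.mem_closedBall, dist_eq_norm] using hx
  set gx := toSchwartz (fun t => (starRingEnd ℂ) (χ (t - x)))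
    ((Complex.conjCLE.contDiff).comp (hχ.comp (contDiff_id.sub contDiff_const)))
    ((hχc.comp_left (g := starRingEnd ℂ) (map_zero _)).comp_isClosedEmbedding
      (Homeomorph.subRight x).isClosedEmbedding) with hgxdef
  have hgxapp : ∀ t, gx t = (starRingEnd ℂ) (χ (t - x)) := fun t => rfl
  have hdist : ∀ t : EuclideanSpace ℝ (Fin d), χ (t - x) ≠ 0 → dist t x₀ ≤ r/2 := by
    intro t ht
    have h3 : t - x ∈ tsupport χ := subset_tsupport χ ht
    have h4 : ‖t - x‖ ≤ r/4 := by
      have := hsuppball h3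
      simpa [Metric.mem_closedBall, dist_eq_norm] using this
    have h5 : dist t x₀ ≤ ‖t - x‖ + ‖x - x₀‖ := by
      rw [dist_eq_norm]
      have : t - x₀ = (t - x) + (x - x₀) := by abel
      rw [this]
      exact norm_add_le _ _
    linarith
  have hψ1' : ∀ t, χ (t - x) ≠ 0 → ψ t = 1 := fun t ht => hψ1 t (hdist t ht)
  have hkey2 : P ξ gx = toSchwartz
      (fun t => Complex.exp (-(⟪ξ, t⟫ : ℝ) * Complex.I) * (starRingEnd ℂ) (χ (t - x)))
      (((((Complex.ofRealCLM.contDiff.comp (innerSL ℝ ξ).contDiff).neg.mul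
        contDiff_const).cexp)).mul
        ((Complex.conjCLE.contDiff).comp (hχ.comp (contDiff_id.sub contDiff_const))))
      ((hχc.comp_left (g := starRingEnd ℂ) (map_zero _)).comp_isClosedEmbedding
        (Homeomorph.subRight x).isClosedEmbedding).mul_left := by
    apply SchwartzMap.ext
    intro t
    show (starRingEnd ℂ) (χ (t - x)) * (Complex.exp _ * ψ t)
      = Complex.exp _ * (starRingEnd ℂ) (χ (t - x))
    by_cases h : χ (t - x) = 0
    · simp [h]
    · rw [hψ1' t h]; ring
  have hSTFT : STFT f χ hχ hχc x ξ = f (P ξ gx) := by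
    rw [hkey2]; rfl
  -- norm estimates via the seminorm bound
  have hpos : (0:ℝ) < (1 + ‖ξ‖) ^ n := by positivity
  have hpow : (1 + ‖ξ‖ : ℝ) ^ (-(n:ℝ)) = ((1 + ‖ξ‖) ^ n)⁻¹ := by
    rw [Real.rpow_neg (by positivity), Real.rpow_natCast]
  have h5 : ‖(T ⟨ξ, hξ⟩) gx‖ ≤ q gx := by
    have h6 := Seminorm.le_def.mp (hqb ⟨ξ, hξ⟩) gx
    simpa [Seminorm.comp_apply] using h6
  have h6 : q gx ≤ (C:ℝ) * (s.sup (schwartzSeminormFamily ℝ (EuclideanSpace ℝ (Fin d)) ℂ)) gx := by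
    have h7 := Seminorm.le_def.mp hCq gx
    rwa [Seminorm.smul_apply, NNReal.smul_def, smul_eq_mul] at h7
  have hTnorm : ‖(T ⟨ξ, hξ⟩) gx‖ = (1 + ‖ξ‖) ^ n * ‖f (P ξ gx)‖ := by
    show ‖((1 + ‖ξ‖) ^ n : ℝ) • ((f.restrictScalars ℝ).comp (P ξ)) gx‖ = _
    rw [norm_smul, Real.norm_eq_abs, abs_of_pos hpos]
    rfl
  have hfP : ‖f (P ξ gx)‖ ≤ ((C:ℝ) * (s.sup (schwartzSeminormFamily ℝ (EuclideanSpace ℝ (Fin d)) ℂ)) gx)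
      * (1 + ‖ξ‖) ^ (-(n:ℝ)) := by
    have h7 : (1 + ‖ξ‖) ^ n * ‖f (P ξ gx)‖
        ≤ (C:ℝ) * (s.sup (schwartzSeminormFamily ℝ (EuclideanSpace ℝ (Fin d)) ℂ)) gx := by
      rw [← hTnorm]; exact le_trans h5 h6
    calc ‖f (P ξ gx)‖ = ((1 + ‖ξ‖) ^ n)⁻¹ * ((1 + ‖ξ‖) ^ n * ‖f (P ξ gx)‖) := by
          field_simp
      _ ≤ ((1 + ‖ξ‖) ^ n)⁻¹
          * ((C:ℝ) * (s.sup (schwartzSeminormFamily ℝ (EuclideanSpace ℝ (Fin d)) ℂ)) gx) := by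
          gcongr
      _ = _ := by rw [hpow]; ring
  -- bound the Schwartz seminorms of the window by supNorm
  have hsupN0 : 0 ≤ supNorm kk χ := by
    have h0 : (0:ℝ) ≤ ⨆ y, ‖iteratedFDeriv ℝ 0 χ y‖ :=
      Real.iSup_nonneg (fun y => norm_nonneg _)
    have h1 := Finset.le_sup' (fun i => ⨆ y, ‖iteratedFDeriv ℝ i χ y‖)
      (Finset.mem_range.mpr (Nat.succ_pos kk))
    exact le_trans h0 h1
  have hsupb : (s.sup (schwartzSeminormFamily ℝ (EuclideanSpace ℝ (Fin d)) ℂ)) gx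
      ≤ R ^ kmax * supNorm kk χ := by
    have hbound : (0:ℝ) ≤ R ^ kmax * supNorm kk χ := by positivity
    apply Seminorm.finset_sup_apply_le hbound
    intro i hi
    have hi1 : i.1 ≤ kmax := Finset.le_sup (f := fun j : ℕ × ℕ => j.1) hi
    have hi2 : i.2 ≤ kk := Finset.le_sup (f := fun j : ℕ × ℕ => j.2) hi
    show SchwartzMap.seminorm ℝ i.1 i.2 gx ≤ R ^ kmax * supNorm kk χ
    apply SchwartzMap.seminorm_le_bound ℝ i.1 i.2 gx hbound
    intro t
    by_cases hts : t ∈ tsupport (⇑gx)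
    · have htb : ‖t‖ ≤ R := by
        have hsub : t ∈ Metric.closedBall x₀ (r/2) := by
          have hcl : tsupport (⇑gx) ⊆ Metric.closedBall x₀ (r/2) := by
            apply closure_minimal ?_ Metric.isClosed_closedBall
            intro z hz
            have hz' : χ (z - x) ≠ 0 := by
              intro h0
              apply hz
              rw [hgxapp, h0, map_zero]
            exact Metric.mem_closedBall.mpr (hdist z hz')
          exact hcl hts
        have := Metric.mem_closedBall.mp hsub
        rw [dist_eq_norm] at this
        calc ‖t‖ = ‖(t - x₀) + x₀‖ := by rw [sub_add_cancel]
          _ ≤ ‖t - x₀‖ + ‖x₀‖ := norm_add_le _ _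
          _ ≤ r/2 + ‖x₀‖ := by linarith
          _ ≤ R := by rw [hRdef]; linarith
      have hder : ‖iteratedFDeriv ℝ i.2 (⇑gx) t‖ ≤ supNorm kk χ := by
        have e1 : ⇑gx = ⇑Complex.conjLIE ∘ (fun z => χ (z - x)) := by
          funext z
          simp [hgxapp, Complex.conjLIE_apply]
        rw [e1, LinearIsometryEquiv.norm_iteratedFDeriv_comp_left Complex.conjLIE _ t i.2,
          iteratedFDeriv_comp_sub_aux hχ x i.2 t]
        have hbddA : BddAbove (Set.range fun y => ‖iteratedFDeriv ℝ i.2 χ y‖) := by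
          obtain ⟨Cb, hCb⟩ := (hχc.iteratedFDeriv (𝕜 := ℝ) i.2).exists_bound_of_continuous
            (hχ.continuous_iteratedFDeriv (mod_cast le_top))
          exact ⟨Cb, Set.forall_mem_range.mpr hCb⟩
        calc ‖iteratedFDeriv ℝ i.2 χ (t - x)‖ ≤ ⨆ y, ‖iteratedFDeriv ℝ i.2 χ y‖ :=
              le_ciSup hbddA _
          _ ≤ supNorm kk χ := Finset.le_sup' (fun j => ⨆ y, ‖iteratedFDeriv ℝ j χ y‖)
              (Finset.mem_range.mpr (Nat.lt_succ_of_le hi2))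
      calc ‖t‖ ^ i.1 * ‖iteratedFDeriv ℝ i.2 (⇑gx) t‖
          ≤ R ^ i.1 * supNorm kk χ := by
            apply mul_le_mul (pow_le_pow_left₀ (norm_nonneg t) htb i.1) hder
              (norm_nonneg _) (pow_nonneg hR0 _)
        _ ≤ R ^ kmax * supNorm kk χ := by
            apply mul_le_mul_of_nonneg_right (pow_le_pow_right₀ hR1 hi1) hsupN0
    · have hz : iteratedFDeriv ℝ i.2 (⇑gx) t = 0 := by
        by_contra h
        exact hts (support_iteratedFDeriv_subset i.2 h)
      rw [hz, norm_zero, mul_zero]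
      exact hbound
  calc ‖STFT f χ hχ hχc x ξ‖ = ‖f (P ξ gx)‖ := by rw [hSTFT]
    _ ≤ ((C:ℝ) * (s.sup (schwartzSeminormFamily ℝ (EuclideanSpace ℝ (Fin d)) ℂ)) gx)
        * (1 + ‖ξ‖) ^ (-(n:ℝ)) := hfP
    _ ≤ ((C:ℝ) * (R ^ kmax * supNorm kk χ)) * (1 + ‖ξ‖) ^ (-(n:ℝ)) := by
        apply mul_le_mul_of_nonneg_right _ (Real.rpow_nonneg (by positivity) _)
        exact mul_le_mul_of_nonneg_left hsupb hCpos.le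
    _ = (C:ℝ) * R ^ kmax * supNorm kk χ * (1 + ‖ξ‖) ^ (-(n:ℝ)) := by ring
end

section
/- Let f be a tempered distribution on ℝ^d, x₀ ∈ ℝ^d, ξ₀ ∈ ℝ^d \ {0} and s ∈ ℝ. Suppose there exist a compact neighbourhood K₁ of x₀ (a closed ball centred at x₀ of radius r > 0), a cone neighbourhood Γ of ξ₀, C > 0 and k ∈ ℕ such that (∫_Γ ⟨ξ⟩^{2s}|F(χf)(ξ)|² dξ)^{1/2} ≤ C · sup_{|α| ≤ k} ‖D^α χ‖_{L^∞(K₁)} for all compactly supported smooth χ with support in K₁. Then, with K the closed ball centred at x₀ of radius r/2, one has sup_{x ∈ K} (∫_Γ ⟨ξ⟩^{2s}|V_χ f(x,ξ)|² dξ)^{1/2} ≤ C · sup_{|α| ≤ k} ‖D^α χ‖_{L^∞(ℝ^d)} for all compactly supported smooth χ with support contained in K − {x₀} := {y ∈ ℝ^d : y + x₀ ∈ K}. (Theorem 1.2, (ii) ⇒ (iii).) -/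
set_option maxHeartbeats 1000000

open MeasureTheory Complex
open scoped ContDiff InnerProductSpace ENNReal RealInnerProductSpace

variable {d : ℕ}

lemma iteratedFDeriv_comp_sub'' {E F : Type*} [NormedAddCommGroup E] [NormedSpace ℝ E]
    [NormedAddCommGroup F] [NormedSpace ℝ F] (χ : E → F) (hχ : ContDiff ℝ ∞ χ) (x : E) :
    ∀ (i : ℕ) (t : E), iteratedFDeriv ℝ i (fun s => χ (s - x)) t = iteratedFDeriv ℝ i χ (t - x) := by
  intro i
  induction i with
  | zero =>
    intro t
    ext m
    simp [iteratedFDeriv_zero_apply]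
  | succ n ih =>
    intro t
    rw [iteratedFDeriv_succ_eq_comp_left, iteratedFDeriv_succ_eq_comp_left]
    simp only [Function.comp_apply]
    congr 1
    rw [show (iteratedFDeriv ℝ n fun s => χ (s - x))
        = fun s => iteratedFDeriv ℝ n χ (s - x) from funext ih]
    have hdiff : DifferentiableAt ℝ (iteratedFDeriv ℝ n χ) (t - x) :=
      (hχ.differentiable_iteratedFDeriv (by exact_mod_cast lt_top_iff_ne_top.2 (by simp))).differentiableAt
    have h1 : HasFDerivAt (fun s : E => s - x) (ContinuousLinearMap.id ℝ E) t :=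
      (hasFDerivAt_id t).sub_const x
    have h2 := (hdiff.hasFDerivAt.comp t h1).fderiv
    rw [show (fun s => iteratedFDeriv ℝ n χ (s - x))
        = iteratedFDeriv ℝ n χ ∘ fun s => s - x from rfl, h2, ContinuousLinearMap.comp_id]

/-- Theorem 1.2, (ii) ⇒ (iii). -/
theorem stmt7 {d : ℕ} (f : SchwartzMap (EuclideanSpace ℝ (Fin d)) ℂ →L[ℂ] ℂ)
    (x₀ ξ₀ : EuclideanSpace ℝ (Fin d)) (hξ₀ : ξ₀ ≠ 0) (s : ℝ) (r : ℝ) (hr : 0 < r)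
    (Γ : Set (EuclideanSpace ℝ (Fin d))) (hΓ : IsConeNbhd Γ ξ₀) (C : ℝ) (hC : 0 < C) (k : ℕ)
    (hbound : ∀ (χ : EuclideanSpace ℝ (Fin d) → ℂ) (hχ : ContDiff ℝ ∞ χ) (hχc : HasCompactSupport χ),
      tsupport χ ⊆ Metric.closedBall x₀ r →
      l2Cone s Γ (FT f χ hχ hχc) ≤
        ENNReal.ofReal (C * supNormOn (Metric.closedBall x₀ r) k χ)) :
    ∀ (χ : EuclideanSpace ℝ (Fin d) → ℂ) (hχ : ContDiff ℝ ∞ χ) (hχc : HasCompactSupport χ),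
      tsupport χ ⊆ {y : EuclideanSpace ℝ (Fin d) | y + x₀ ∈ Metric.closedBall x₀ (r / 2)} →
      ∀ x ∈ Metric.closedBall x₀ (r / 2),
        l2Cone s Γ (STFT f χ hχ hχc x) ≤ ENNReal.ofReal (C * supNorm k χ) := by
  intro χ hχ hχc hsupp x hx
  set ψ : EuclideanSpace ℝ (Fin d) → ℂ := fun t => (starRingEnd ℂ) (χ (t - x)) with hψdef
  have hψ : ContDiff ℝ ∞ ψ :=
    (Complex.conjCLE.contDiff).comp (hχ.comp (contDiff_id.sub contDiff_const))
  have hψc : HasCompactSupport ψ :=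
    ((hχc.comp_left (g := starRingEnd ℂ) (map_zero _)).comp_isClosedEmbedding
      (Homeomorph.subRight x).isClosedEmbedding)
  have hψsupp : tsupport ψ ⊆ Metric.closedBall x₀ r := by
    apply closure_minimal _ Metric.isClosed_closedBall
    intro t ht
    have hχt : χ (t - x) ≠ 0 := by
      simp only [hψdef, Function.mem_support, ne_eq, map_eq_zero] at ht
      exact ht
    have h1 : t - x ∈ tsupport χ := subset_closure hχt
    have h2 := hsupp h1
    simp only [Set.mem_setOf_eq, Metric.mem_closedBall] at h2
    have h3 : ‖t - x‖ ≤ r / 2 := by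
      have : dist (t - x + x₀) x₀ = ‖t - x‖ := by
        rw [dist_eq_norm]; congr 1; abel
      linarith [this ▸ h2]
    have h4 : dist x x₀ ≤ r / 2 := Metric.mem_closedBall.1 hx
    have : dist t x₀ ≤ dist t x + dist x x₀ := dist_triangle t x x₀
    rw [Metric.mem_closedBall]
    rw [dist_eq_norm] at this ⊢
    calc ‖t - x₀‖ ≤ ‖t - x‖ + dist x x₀ := by rw [← dist_eq_norm] at *; exact this
      _ ≤ r / 2 + r / 2 := add_le_add h3 h4
      _ = r := by ring
  have hsup : supNormOn (Metric.closedBall x₀ r) k ψ ≤ supNorm k χ := by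
    apply Finset.sup'_le
    intro i hi
    refine le_trans ?_ (Finset.le_sup' (fun i => ⨆ y, ‖iteratedFDeriv ℝ i χ y‖) hi)
    have hbdd : BddAbove (Set.range fun y => ‖iteratedFDeriv ℝ i χ y‖) := by
      obtain ⟨B, hB⟩ := (hχc.iteratedFDeriv (𝕜 := ℝ) i).exists_bound_of_continuous
        (hχ.continuous_iteratedFDeriv (mod_cast le_top))
      exact ⟨B, fun v ⟨y, hy⟩ => hy ▸ hB y⟩
    haveI : Nonempty (Metric.closedBall x₀ r) :=
      (Metric.nonempty_closedBall.2 hr.le).to_subtype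
    apply ciSup_le
    rintro ⟨t, ht⟩
    have key : ‖iteratedFDeriv ℝ i ψ t‖ = ‖iteratedFDeriv ℝ i χ (t - x)‖ := by
      have hψeq : ψ = ⇑Complex.conjLIE ∘ fun s => χ (s - x) := rfl
      rw [hψeq, LinearIsometryEquiv.norm_iteratedFDeriv_comp_left,
        iteratedFDeriv_comp_sub'' χ hχ x i t]
    rw [key]
    exact le_ciSup hbdd (t - x)
  calc l2Cone s Γ (STFT f χ hχ hχc x) = l2Cone s Γ (FT f ψ hψ hψc) := rfl
    _ ≤ ENNReal.ofReal (C * supNormOn (Metric.closedBall x₀ r) k ψ) :=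
        hbound ψ hψ hψc hψsupp
    _ ≤ ENNReal.ofReal (C * supNorm k χ) :=
        ENNReal.ofReal_le_ofReal (mul_le_mul_of_nonneg_left hsup hC.le)
end

section
/- Let Γ, Γ' ⊆ ℝ^d \ {0} be cones, let 0 < c < 1 satisfy {η ∈ ℝ^d : ∃ ξ ∈ Γ with |ξ − η| ≤ c|ξ|} ⊆ Γ', let s ≥ 0, let g : ℝ^d → ℂ be measurable with C_g := (∫_{Γ'} ⟨ξ⟩^{2s}|g(ξ)|² dξ)^{1/2} < ∞, and let h ∈ L¹(ℝ^d). Then ∫_{ℝ^d} |h(η)| (∫_{{ξ ∈ Γ : |ξ| ≥ |η|/c}} ⟨ξ⟩^{2s} |g(ξ−η)|² dξ)^{1/2} dη ≤ (1−c)^{-s} · C_g · ‖h‖_{L¹(ℝ^d)}. (Estimate of the term I₁ in the proof of Theorem 1.2, (i) ⇒ (ii).) -/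
set_option maxHeartbeats 1000000

open MeasureTheory Complex
open scoped ContDiff InnerProductSpace ENNReal RealInnerProductSpace

variable {d : ℕ}

lemma pow_bound {c s : ℝ} (hc0 : 0 < c) (hc1 : c < 1) (hs : 0 ≤ s) {a b e : ℝ}
    (ha : 0 ≤ a) (hb : 0 ≤ b) (he : e ≤ c * a) (hbe : a - e ≤ b) :
    (1 + a ^ 2) ^ s ≤ (1 - c) ^ (-(2 * s)) * (1 + b ^ 2) ^ s := by
  have h1c : (0:ℝ) < 1 - c := by linarith
  have hba : (1 - c) * a ≤ b := by nlinarith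
  have hbase : (1 - c) ^ 2 * (1 + a ^ 2) ≤ 1 + b ^ 2 := by
    nlinarith [mul_le_mul hba hba (by positivity) hb]
  have h2 : ((1 - c) ^ 2 * (1 + a ^ 2)) ^ s ≤ (1 + b ^ 2) ^ s :=
    Real.rpow_le_rpow (by positivity) hbase hs
  rw [Real.mul_rpow (by positivity) (by positivity)] at h2
  have h3 : ((1 - c) ^ 2 : ℝ) ^ s = (1 - c) ^ (2 * s) := by
    rw [← Real.rpow_natCast (1 - c) 2, ← Real.rpow_mul h1c.le]
    norm_num
  rw [h3] at h2
  have hpos : (0:ℝ) < (1 - c) ^ (2 * s) := Real.rpow_pos_of_pos h1c _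
  have := mul_le_mul_of_nonneg_left h2 (by positivity : (0:ℝ) ≤ ((1 - c) ^ (2 * s))⁻¹)
  rw [← mul_assoc, inv_mul_cancel₀ hpos.ne', one_mul] at this
  rwa [Real.rpow_neg h1c.le]

theorem stmt12' {d : ℕ} (Γ Γ' : Set (EuclideanSpace ℝ (Fin d)))
    (c : ℝ) (hc0 : 0 < c) (hc1 : c < 1)
    (hsub : {η : EuclideanSpace ℝ (Fin d) | ∃ ξ ∈ Γ, ‖ξ - η‖ ≤ c * ‖ξ‖} ⊆ Γ')
    (s : ℝ) (hs : 0 ≤ s)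
    (g : EuclideanSpace ℝ (Fin d) → ℂ) (hg : Measurable g)
    (hCg : (∫⁻ ξ in Γ', ENNReal.ofReal ((1 + ‖ξ‖ ^ 2) ^ s) * (‖g ξ‖₊ : ℝ≥0∞) ^ 2) < ⊤)
    (h : EuclideanSpace ℝ (Fin d) → ℂ) :
    ∫⁻ η, (‖h η‖₊ : ℝ≥0∞) *
        (∫⁻ ξ in {ξ ∈ Γ | ‖η‖ / c ≤ ‖ξ‖},
          ENNReal.ofReal ((1 + ‖ξ‖ ^ 2) ^ s) * (‖g (ξ - η)‖₊ : ℝ≥0∞) ^ 2) ^ (1 / 2 : ℝ) ≤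
      ENNReal.ofReal ((1 - c) ^ (-s)) *
        ((∫⁻ ξ in Γ', ENNReal.ofReal ((1 + ‖ξ‖ ^ 2) ^ s) * (‖g ξ‖₊ : ℝ≥0∞) ^ 2) ^ (1/2 : ℝ)) *
        ∫⁻ η, (‖h η‖₊ : ℝ≥0∞) := by
  have h1c : (0:ℝ) < 1 - c := by linarith
  set I : ℝ≥0∞ := ∫⁻ ξ in Γ', ENNReal.ofReal ((1 + ‖ξ‖ ^ 2) ^ s) * (‖g ξ‖₊ : ℝ≥0∞) ^ 2 with hI
  set G : EuclideanSpace ℝ (Fin d) → ℝ≥0∞ :=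
    fun ζ => ENNReal.ofReal ((1 + ‖ζ‖ ^ 2) ^ s) * (‖g ζ‖₊ : ℝ≥0∞) ^ 2 with hGdef
  have hGmeas : Measurable G := by
    refine Measurable.mul (f := fun ζ => ENNReal.ofReal ((1 + ‖ζ‖ ^ 2) ^ s))
      (g := fun ζ => (‖g ζ‖₊ : ℝ≥0∞) ^ 2) ?_ ?_
    · have hcont : Continuous fun ζ : EuclideanSpace ℝ (Fin d) => (1 + ‖ζ‖ ^ 2) ^ s :=
        Continuous.rpow_const (by continuity) fun x => Or.inl (by positivity)
      exact ENNReal.measurable_ofReal.comp hcont.measurable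
    · exact (measurable_coe_nnreal_ennreal.comp hg.nnnorm).pow_const 2
  set Γ'' := toMeasurable volume Γ' with hΓ''def
  have hΓ''m : MeasurableSet Γ'' := measurableSet_toMeasurable _ _
  have hsubΓ'' : Γ' ⊆ Γ'' := subset_toMeasurable _ _
  have hIeq : I = ∫⁻ ζ in Γ'', G ζ := by
    rw [hI, ← Measure.restrict_toMeasurable_of_sFinite]
  have key : ∀ η : EuclideanSpace ℝ (Fin d),
      (∫⁻ ξ in {ξ ∈ Γ | ‖η‖ / c ≤ ‖ξ‖},
          ENNReal.ofReal ((1 + ‖ξ‖ ^ 2) ^ s) * (‖g (ξ - η)‖₊ : ℝ≥0∞) ^ 2) ≤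
        ENNReal.ofReal ((1 - c) ^ (-(2 * s))) * I := by
    intro η
    have step1 : (∫⁻ ξ in {ξ ∈ Γ | ‖η‖ / c ≤ ‖ξ‖},
          ENNReal.ofReal ((1 + ‖ξ‖ ^ 2) ^ s) * (‖g (ξ - η)‖₊ : ℝ≥0∞) ^ 2) ≤
        ∫⁻ ξ in {ξ ∈ Γ | ‖η‖ / c ≤ ‖ξ‖},
          ENNReal.ofReal ((1 - c) ^ (-(2 * s))) * Γ''.indicator G (ξ - η) := by
      apply setLIntegral_mono
      · exact measurable_const.mul ((hGmeas.indicator hΓ''m).comp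
          (measurable_id.sub measurable_const))
      · rintro ξ ⟨hξΓ, hξn⟩
        have hn : ‖η‖ ≤ c * ‖ξ‖ := by
          rw [div_le_iff₀ hc0] at hξn
          linarith [mul_comm ‖ξ‖ c]
        have hmem : ξ - η ∈ Γ' := hsub ⟨ξ, hξΓ, by simpa using hn⟩
        rw [Set.indicator_of_mem (hsubΓ'' hmem)]
        have hreal : (1 + ‖ξ‖ ^ 2) ^ s ≤
            (1 - c) ^ (-(2 * s)) * (1 + ‖ξ - η‖ ^ 2) ^ s :=
          pow_bound hc0 hc1 hs (norm_nonneg ξ) (norm_nonneg (ξ - η)) hn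
            (by linarith [norm_sub_norm_le ξ η])
        have h4 : ENNReal.ofReal ((1 + ‖ξ‖ ^ 2) ^ s) * (‖g (ξ - η)‖₊ : ℝ≥0∞) ^ 2 ≤
            ENNReal.ofReal ((1 - c) ^ (-(2 * s)) * (1 + ‖ξ - η‖ ^ 2) ^ s) *
              (‖g (ξ - η)‖₊ : ℝ≥0∞) ^ 2 :=
          mul_le_mul_left (ENNReal.ofReal_le_ofReal hreal) _
        refine h4.trans (le_of_eq ?_)
        rw [ENNReal.ofReal_mul (by positivity), mul_assoc]
    refine step1.trans ?_
    have step2 : (∫⁻ ξ in {ξ ∈ Γ | ‖η‖ / c ≤ ‖ξ‖},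
          ENNReal.ofReal ((1 - c) ^ (-(2 * s))) * Γ''.indicator G (ξ - η)) ≤
        ∫⁻ ξ, ENNReal.ofReal ((1 - c) ^ (-(2 * s))) * Γ''.indicator G (ξ - η) :=
      setLIntegral_le_lintegral _ _
    refine step2.trans (le_of_eq ?_)
    rw [lintegral_const_mul' _ _ ENNReal.ofReal_ne_top,
      (measurePreserving_sub_right volume η).lintegral_comp (hGmeas.indicator hΓ''m),
      lintegral_indicator hΓ''m, ← hIeq]
  have hA : ENNReal.ofReal ((1 - c) ^ (-(2 * s))) ^ (1 / 2 : ℝ) =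
      ENNReal.ofReal ((1 - c) ^ (-s)) := by
    rw [ENNReal.ofReal_rpow_of_nonneg (by positivity) (by norm_num),
      ← Real.rpow_mul h1c.le]
    congr 1
    ring
  have hfin : ENNReal.ofReal ((1 - c) ^ (-s)) * I ^ (1 / 2 : ℝ) ≠ ⊤ :=
    ENNReal.mul_ne_top ENNReal.ofReal_ne_top
      (ENNReal.rpow_lt_top_of_nonneg (by norm_num) hCg.ne).ne
  have main : ∫⁻ η, (‖h η‖₊ : ℝ≥0∞) *
        (∫⁻ ξ in {ξ ∈ Γ | ‖η‖ / c ≤ ‖ξ‖},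
          ENNReal.ofReal ((1 + ‖ξ‖ ^ 2) ^ s) * (‖g (ξ - η)‖₊ : ℝ≥0∞) ^ 2) ^ (1 / 2 : ℝ) ≤
      ∫⁻ η, (‖h η‖₊ : ℝ≥0∞) * (ENNReal.ofReal ((1 - c) ^ (-s)) * I ^ (1 / 2 : ℝ)) := by
    apply lintegral_mono
    intro η
    apply mul_le_mul_right
    have h2 := ENNReal.rpow_le_rpow (key η) (by norm_num : (0:ℝ) ≤ 1 / 2)
    rwa [ENNReal.mul_rpow_of_nonneg _ _ (by norm_num), hA] at h2
  refine main.trans (le_of_eq ?_)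
  rw [lintegral_mul_const' _ _ hfin, mul_comm]

/-- Estimate of the term `I₁` in the proof of Theorem 1.2, (i) ⇒ (ii). -/
theorem stmt12 {d : ℕ} (Γ Γ' : Set (EuclideanSpace ℝ (Fin d))) (hΓ : IsCone Γ) (hΓ' : IsCone Γ')
    (c : ℝ) (hc0 : 0 < c) (hc1 : c < 1)
    (hsub : {η : EuclideanSpace ℝ (Fin d) | ∃ ξ ∈ Γ, ‖ξ - η‖ ≤ c * ‖ξ‖} ⊆ Γ')
    (s : ℝ) (hs : 0 ≤ s)
    (g : EuclideanSpace ℝ (Fin d) → ℂ) (hg : Measurable g) (hCg : sqIntCone s Γ' g < ⊤)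
    (h : EuclideanSpace ℝ (Fin d) → ℂ) (hh : MeasureTheory.Integrable h) :
    ∫⁻ η, (‖h η‖₊ : ℝ≥0∞) *
        (∫⁻ ξ in {ξ ∈ Γ | ‖η‖ / c ≤ ‖ξ‖},
          ENNReal.ofReal ((1 + ‖ξ‖ ^ 2) ^ s) * (‖g (ξ - η)‖₊ : ℝ≥0∞) ^ 2) ^ (1 / 2 : ℝ) ≤
      ENNReal.ofReal ((1 - c) ^ (-s)) * l2Cone s Γ' g * ∫⁻ η, (‖h η‖₊ : ℝ≥0∞) := by
  exact stmt12' Γ Γ' c hc0 hc1 hsub s hs g hg hCg h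
end

section
/- Let Γ, Γ' ⊆ ℝ^d \ {0} be cones, let 0 < c < 1 satisfy {η ∈ ℝ^d : ∃ ξ ∈ Γ with |ξ − η| ≤ c|ξ|} ⊆ Γ', let s ≥ 0 and m ≥ 1, and let g : ℝ^d → ℂ be measurable with |g(ξ)| ≤ C₁⟨ξ⟩^m for all ξ ∈ ℝ^d (some C₁ ≥ 1) and with C_g := (∫_{Γ'} ⟨ξ⟩^{2s}|g(ξ)|² dξ)^{1/2} < ∞. Then there exists a constant C > 0, depending only on d, s, m, c, C₁ and C_g, such that for every measurable h : ℝ^d → ℂ with ∫_{ℝ^d} ⟨η⟩^{s+m+d+1}|h(η)| dη < ∞ one has (∫_Γ ⟨ξ⟩^{2s} |(h * g)(ξ)|² dξ)^{1/2} ≤ C · ∫_{ℝ^d} ⟨η⟩^{s+m+d+1}|h(η)| dη, where (h*g)(ξ) = ∫_{ℝ^d} h(η) g(ξ−η) dη. (Weighted L² convolution estimate on cones established in the proof of Theorem 1.2, (i) ⇒ (ii).) -/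
set_option maxHeartbeats 1000000

open MeasureTheory Complex
open scoped ContDiff InnerProductSpace ENNReal RealInnerProductSpace

variable {d : ℕ}

private lemma sq_add_le4 (x y : ℝ≥0∞) : (x + y) ^ 2 ≤ 4 * (x ^ 2 + y ^ 2) := by
  rcases le_total x y with hxy | hxy
  · calc (x + y) ^ 2 ≤ (y + y) ^ 2 := by gcongr
      _ = 4 * y ^ 2 := by ring
      _ ≤ 4 * (x ^ 2 + y ^ 2) := by gcongr; exact le_add_self
  · calc (x + y) ^ 2 ≤ (x + x) ^ 2 := by gcongr
      _ = 4 * x ^ 2 := by ring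
      _ ≤ 4 * (x ^ 2 + y ^ 2) := by gcongr; exact le_self_add

private lemma real_peetre {s : ℝ} (hs : 0 ≤ s) (x y : EuclideanSpace ℝ (Fin d)) :
    (1 + ‖x‖ ^ 2) ^ s ≤ 2 ^ s * (1 + ‖y‖ ^ 2) ^ s * (1 + ‖x - y‖ ^ 2) ^ s := by
  have h1 : ‖x‖ ≤ ‖y‖ + ‖x - y‖ := by
    calc ‖x‖ = ‖y + (x - y)‖ := by rw [add_sub_cancel]
      _ ≤ ‖y‖ + ‖x - y‖ := norm_add_le _ _
  have h2 : (0:ℝ) ≤ ‖y‖ := norm_nonneg _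
  have h3 : (0:ℝ) ≤ ‖x - y‖ := norm_nonneg _
  have h0 : (0:ℝ) ≤ ‖x‖ := norm_nonneg _
  have h4 : 1 + ‖x‖ ^ 2 ≤ 2 * (1 + ‖y‖ ^ 2) * (1 + ‖x - y‖ ^ 2) := by
    nlinarith [sq_nonneg (‖y‖ - ‖x - y‖), sq_nonneg (‖y‖ * ‖x - y‖), sq_nonneg ‖x‖]
  calc (1 + ‖x‖ ^ 2) ^ s ≤ (2 * (1 + ‖y‖ ^ 2) * (1 + ‖x - y‖ ^ 2)) ^ s :=
        Real.rpow_le_rpow (by positivity) h4 hs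
    _ = 2 ^ s * (1 + ‖y‖ ^ 2) ^ s * (1 + ‖x - y‖ ^ 2) ^ s := by
        rw [Real.mul_rpow (by positivity) (by positivity),
          Real.mul_rpow (by norm_num) (by positivity)]

private lemma far_g {c : ℝ} (hc0 : 0 < c) {m : ℝ} (hm : 0 ≤ m) {x y : EuclideanSpace ℝ (Fin d)}
    (hxy : c * ‖x‖ ≤ ‖y‖) :
    (1 + ‖x - y‖ ^ 2) ^ (m / 2) ≤ (1 + 1 / c) ^ m * (1 + ‖y‖ ^ 2) ^ (m / 2) := by
  have h1c : (1:ℝ) ≤ 1 + 1 / c := le_add_of_nonneg_right (by positivity)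
  have h1 : 1 + ‖x - y‖ ^ 2 ≤ (1 + 1 / c) ^ 2 * (1 + ‖y‖ ^ 2) := by
    have ht : ‖x - y‖ ≤ ‖x‖ + ‖y‖ := norm_sub_le _ _
    have hx : ‖x‖ ≤ ‖y‖ / c := by rw [le_div_iff₀ hc0]; nlinarith
    have h2 : ‖x - y‖ ≤ (1 + 1 / c) * ‖y‖ := by
      have : ‖y‖ / c = (1 / c) * ‖y‖ := by ring
      nlinarith [norm_nonneg y]
    nlinarith [norm_nonneg (x - y), norm_nonneg y, sq_nonneg ‖y‖]
  calc (1 + ‖x - y‖ ^ 2) ^ (m / 2) ≤ ((1 + 1 / c) ^ 2 * (1 + ‖y‖ ^ 2)) ^ (m / 2) :=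
        Real.rpow_le_rpow (by positivity) h1 (by linarith)
    _ = (1 + 1 / c) ^ m * (1 + ‖y‖ ^ 2) ^ (m / 2) := by
        rw [Real.mul_rpow (by positivity) (by positivity), ← Real.rpow_natCast (1 + 1/c) 2,
          ← Real.rpow_mul (by positivity)]
        congr 1
        push_cast; ring

private lemma far_w {c : ℝ} (hc0 : 0 < c) (hc1 : c < 1) {e : ℝ} (he : 0 ≤ e)
    {x y : EuclideanSpace ℝ (Fin d)} (hxy : c * ‖x‖ ≤ ‖y‖) :
    (1 + ‖x‖ ^ 2) ^ (e / 2) ≤ c ^ (-e) * (1 + ‖y‖ ^ 2) ^ (e / 2) := by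
  have h1 : 1 + ‖x‖ ^ 2 ≤ (c⁻¹) ^ 2 * (1 + ‖y‖ ^ 2) := by
    have h2 : c ^ 2 * ‖x‖ ^ 2 ≤ ‖y‖ ^ 2 := by
      have := mul_self_le_mul_self (by positivity : (0:ℝ) ≤ c * ‖x‖) hxy
      nlinarith
    have h3 : c ^ 2 * (1 + ‖x‖ ^ 2) ≤ 1 + ‖y‖ ^ 2 := by nlinarith
    calc 1 + ‖x‖ ^ 2 = (c⁻¹) ^ 2 * (c ^ 2 * (1 + ‖x‖ ^ 2)) := by
          field_simp
      _ ≤ (c⁻¹) ^ 2 * (1 + ‖y‖ ^ 2) := by gcongr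
  calc (1 + ‖x‖ ^ 2) ^ (e / 2) ≤ ((c⁻¹) ^ 2 * (1 + ‖y‖ ^ 2)) ^ (e / 2) :=
        Real.rpow_le_rpow (by positivity) h1 (by linarith)
    _ = c ^ (-e) * (1 + ‖y‖ ^ 2) ^ (e / 2) := by
        rw [Real.mul_rpow (by positivity) (by positivity), ← Real.rpow_natCast c⁻¹ 2,
          ← Real.rpow_mul (by positivity), Real.inv_rpow hc0.le, ← Real.rpow_neg hc0.le]
        congr 2
        push_cast; ring

private lemma ennreal_sqrt_sq (x : ℝ≥0∞) : (x ^ 2) ^ (1/2 : ℝ) = x := by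
  rw [← ENNReal.rpow_natCast x 2, ← ENNReal.rpow_mul]
  norm_num

private lemma ennreal_sq_sqrt (x : ℝ≥0∞) : (x ^ (1/2 : ℝ)) ^ 2 = x := by
  rw [← ENNReal.rpow_natCast (x ^ (1/2:ℝ)) 2, ← ENNReal.rpow_mul]
  norm_num

private noncomputable def wt (a : ℝ) (x : EuclideanSpace ℝ (Fin d)) : ℝ≥0∞ :=
  ENNReal.ofReal ((1 + ‖x‖ ^ 2) ^ a)

private lemma wt_def (a : ℝ) (x : EuclideanSpace ℝ (Fin d)) :
    wt a x = ENNReal.ofReal ((1 + ‖x‖ ^ 2) ^ a) := rfl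

private lemma one_add_sq_pos (x : EuclideanSpace ℝ (Fin d)) : (0:ℝ) < 1 + ‖x‖ ^ 2 := by
  positivity

private lemma one_le_one_add_sq (x : EuclideanSpace ℝ (Fin d)) : (1:ℝ) ≤ 1 + ‖x‖ ^ 2 :=
  le_add_of_nonneg_right (by positivity)

private lemma wt_mul (a b : ℝ) (x : EuclideanSpace ℝ (Fin d)) :
    wt a x * wt b x = wt (a + b) x := by
  rw [wt_def, wt_def, wt_def, ← ENNReal.ofReal_mul (Real.rpow_nonneg (one_add_sq_pos x).le _),
    ← Real.rpow_add (one_add_sq_pos x)]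

private lemma wt_meas (a : ℝ) : Measurable (wt (d := d) a) :=
  ENNReal.measurable_ofReal.comp
    (Continuous.rpow_const (by continuity) fun x => Or.inl (one_add_sq_pos x).ne').measurable

private lemma wt_mono {a b : ℝ} (hab : a ≤ b) (x : EuclideanSpace ℝ (Fin d)) :
    wt a x ≤ wt b x :=
  ENNReal.ofReal_le_ofReal (Real.rpow_le_rpow_of_exponent_le (one_le_one_add_sq x) hab)

private lemma wt_ne_top (a : ℝ) (x : EuclideanSpace ℝ (Fin d)) : wt a x ≠ ⊤ :=
  ENNReal.ofReal_ne_top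

private lemma wt_peetre {s : ℝ} (hs : 0 ≤ s) (x y : EuclideanSpace ℝ (Fin d)) :
    wt s x ≤ ENNReal.ofReal (2 ^ s) * wt s y * wt s (x - y) := by
  rw [wt_def, wt_def, wt_def, ← ENNReal.ofReal_mul (by positivity),
    ← ENNReal.ofReal_mul (by positivity)]
  exact ENNReal.ofReal_le_ofReal (real_peetre hs x y)

/-- Weighted `L²` convolution estimate on cones from the proof of Theorem 1.2, (i) ⇒ (ii). -/
theorem stmt13 {d : ℕ} (Γ Γ' : Set (EuclideanSpace ℝ (Fin d))) (hΓ : IsCone Γ) (hΓ' : IsCone Γ')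
    (c : ℝ) (hc0 : 0 < c) (hc1 : c < 1)
    (hsub : {η : EuclideanSpace ℝ (Fin d) | ∃ ξ ∈ Γ, ‖ξ - η‖ ≤ c * ‖ξ‖} ⊆ Γ')
    (s : ℝ) (hs : 0 ≤ s) (m : ℝ) (hm : 1 ≤ m)
    (g : EuclideanSpace ℝ (Fin d) → ℂ) (hg : Measurable g) (C₁ : ℝ) (hC₁ : 1 ≤ C₁)
    (hgb : ∀ ξ : EuclideanSpace ℝ (Fin d), ‖g ξ‖ ≤ C₁ * (1 + ‖ξ‖ ^ 2) ^ (m / 2))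
    (hCg : sqIntCone s Γ' g < ⊤) :
    ∃ C > (0 : ℝ), ∀ h : EuclideanSpace ℝ (Fin d) → ℂ, Measurable h →
      (∫⁻ η, ENNReal.ofReal ((1 + ‖η‖ ^ 2) ^ ((s + m + d + 1) / 2)) * (‖h η‖₊ : ℝ≥0∞)) < ⊤ →
      l2Cone s Γ (fun ξ => ∫ η, h η * g (ξ - η)) ≤
        ENNReal.ofReal C *
          ∫⁻ η, ENNReal.ofReal ((1 + ‖η‖ ^ 2) ^ ((s + m + d + 1) / 2)) * (‖h η‖₊ : ℝ≥0∞) := by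
  classical
  have hd0 : (0:ℝ) ≤ (d:ℝ) := Nat.cast_nonneg d
  -- a measurable envelope of Γ'
  set S : Set (EuclideanSpace ℝ (Fin d)) := toMeasurable volume Γ' with hSdef
  have hSm : MeasurableSet S := measurableSet_toMeasurable _ _
  have hΓ'S : Γ' ⊆ S := subset_toMeasurable _ _
  set Q : EuclideanSpace ℝ (Fin d) → ℝ≥0∞ :=
    S.indicator (fun ζ => wt s ζ * (‖g ζ‖₊ : ℝ≥0∞) ^ 2) with hQdef
  have hQmeas : Measurable Q := ((wt_meas s).mul (hg.nnnorm.coe_nnreal_ennreal.pow_const 2)).indicator hSm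
  set K : ℝ≥0∞ := ∫⁻ ζ, Q ζ with hKdef
  have hKfin : K < ⊤ := by
    have hKeq : K = sqIntCone s Γ' g := by
      rw [hKdef]
      simp only [hQdef]
      rw [lintegral_indicator hSm, hSdef, Measure.restrict_toMeasurable_of_sFinite]
      rfl
    rw [hKeq]; exact hCg
  -- finiteness of the auxiliary weight integral
  set J : ℝ≥0∞ := ∫⁻ ξ : EuclideanSpace ℝ (Fin d), wt (-((d:ℝ) + 1)) ξ with hJdef
  have hJfin : J < ⊤ := by
    have hint : Integrable (fun x : EuclideanSpace ℝ (Fin d) =>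
        ((1:ℝ) + ‖x‖ ^ 2) ^ (-(2 * (d:ℝ) + 2) / 2)) volume := by
      apply integrable_rpow_neg_one_add_norm_sq
      rw [finrank_euclideanSpace_fin]
      linarith
    calc J ≤ ∫⁻ ξ, (‖((1:ℝ) + ‖ξ‖ ^ 2) ^ (-(2 * (d:ℝ) + 2) / 2)‖₊ : ℝ≥0∞) := by
          refine lintegral_mono fun ξ => ?_
          rw [wt_def, show -((d:ℝ) + 1) = -(2 * (d:ℝ) + 2) / 2 by ring]
          exact Real.ofReal_le_enorm _
      _ < ⊤ := hint.2
  -- constants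
  set C₂ : ℝ := C₁ * ((1 + 1 / c) ^ m * c ^ (-(s + (d:ℝ) + 1))) with hC₂def
  have hC₂pos : 0 < C₂ := by rw [hC₂def]; positivity
  set B₀ : ℝ≥0∞ := 4 * ENNReal.ofReal (2 ^ s) * K + 4 * ENNReal.ofReal C₂ ^ 2 * J with hB₀def
  have hB₀top : B₀ ≠ ⊤ := by
    rw [hB₀def]
    refine ENNReal.add_ne_top.2
      ⟨ENNReal.mul_ne_top (ENNReal.mul_ne_top (by norm_num) ENNReal.ofReal_ne_top) hKfin.ne,
        ENNReal.mul_ne_top (ENNReal.mul_ne_top (by norm_num)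
          (ENNReal.pow_ne_top ENNReal.ofReal_ne_top)) hJfin.ne⟩
  have hCpos : (0:ℝ) < B₀.toReal ^ (1/2:ℝ) + 1 := by
    have := Real.rpow_nonneg (ENNReal.toReal_nonneg (a := B₀)) (1/2:ℝ)
    linarith
  refine ⟨B₀.toReal ^ (1/2:ℝ) + 1, hCpos, ?_⟩
  intro h hh hI
  set I : ℝ≥0∞ :=
    ∫⁻ η, ENNReal.ofReal ((1 + ‖η‖ ^ 2) ^ ((s + m + (d:ℝ) + 1) / 2)) * (‖h η‖₊ : ℝ≥0∞) with hIdef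
  have hIW : I = ∫⁻ η, wt ((s + m + (d:ℝ) + 1) / 2) η * (‖h η‖₊ : ℝ≥0∞) := rfl
  have hameas : Measurable fun η => (‖h η‖₊ : ℝ≥0∞) := hh.nnnorm.coe_nnreal_ennreal
  have hgmeas : ∀ ξ : EuclideanSpace ℝ (Fin d), Measurable fun η => (‖g (ξ - η)‖₊ : ℝ≥0∞) :=
    fun ξ => (hg.comp (measurable_const.sub measurable_id)).nnnorm.coe_nnreal_ennreal
  have hAmeas : ∀ ξ : EuclideanSpace ℝ (Fin d),
      MeasurableSet {η : EuclideanSpace ℝ (Fin d) | ‖η‖ ≤ c * ‖ξ‖} :=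
    fun ξ => measurableSet_le measurable_norm measurable_const
  -- the near and far pieces of the convolution
  set F : EuclideanSpace ℝ (Fin d) → ℝ≥0∞ := fun ξ =>
    ∫⁻ η, {η : EuclideanSpace ℝ (Fin d) | ‖η‖ ≤ c * ‖ξ‖}.indicator
      (fun η => (‖h η‖₊ : ℝ≥0∞) * (‖g (ξ - η)‖₊ : ℝ≥0∞)) η with hFdef
  set G : EuclideanSpace ℝ (Fin d) → ℝ≥0∞ := fun ξ =>
    ∫⁻ η, {η : EuclideanSpace ℝ (Fin d) | ‖η‖ ≤ c * ‖ξ‖}ᶜ.indicator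
      (fun η => (‖h η‖₊ : ℝ≥0∞) * (‖g (ξ - η)‖₊ : ℝ≥0∞)) η with hGdef
  have hconv : ∀ ξ, (‖∫ η, h η * g (ξ - η)‖₊ : ℝ≥0∞) ≤ F ξ + G ξ := by
    intro ξ
    have heq : ∀ η, (‖h η * g (ξ - η)‖₊ : ℝ≥0∞)
        = {η : EuclideanSpace ℝ (Fin d) | ‖η‖ ≤ c * ‖ξ‖}.indicator
            (fun η => (‖h η‖₊ : ℝ≥0∞) * (‖g (ξ - η)‖₊ : ℝ≥0∞)) η
          + {η : EuclideanSpace ℝ (Fin d) | ‖η‖ ≤ c * ‖ξ‖}ᶜ.indicator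
            (fun η => (‖h η‖₊ : ℝ≥0∞) * (‖g (ξ - η)‖₊ : ℝ≥0∞)) η := by
      intro η
      by_cases hη : η ∈ {η : EuclideanSpace ℝ (Fin d) | ‖η‖ ≤ c * ‖ξ‖}
      · rw [Set.indicator_of_mem hη, Set.indicator_of_notMem (by simp [hη]), add_zero,
          nnnorm_mul, ENNReal.coe_mul]
      · rw [Set.indicator_of_notMem hη, Set.indicator_of_mem (by simp [hη]), zero_add,
          nnnorm_mul, ENNReal.coe_mul]
    simp only [hFdef, hGdef]
    refine (enorm_integral_le_lintegral_enorm _).trans (le_of_eq ?_)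
    rw [← lintegral_add_left (f := {η : EuclideanSpace ℝ (Fin d) | ‖η‖ ≤ c * ‖ξ‖}.indicator
      (fun η => (‖h η‖₊ : ℝ≥0∞) * (‖g (ξ - η)‖₊ : ℝ≥0∞))) ((hameas.mul (hgmeas ξ)).indicator (hAmeas ξ))]
    exact lintegral_congr heq
  -- Cauchy-Schwarz for the near piece
  set L : ℝ≥0∞ := ∫⁻ η, wt (s / 2) η * (‖h η‖₊ : ℝ≥0∞) with hLdef
  have hLI : L ≤ I := by
    rw [hLdef, hIW]
    exact lintegral_mono fun η => mul_le_mul_left (wt_mono (by linarith) η) _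
  set M : EuclideanSpace ℝ (Fin d) → ℝ≥0∞ := fun ξ =>
    ∫⁻ η, {η : EuclideanSpace ℝ (Fin d) | ‖η‖ ≤ c * ‖ξ‖}.indicator
      (fun η => wt (-(s/2)) η * (‖h η‖₊ : ℝ≥0∞) * (‖g (ξ - η)‖₊ : ℝ≥0∞) ^ 2) η with hMdef
  have hCS : ∀ ξ, F ξ ≤ L ^ (1/2:ℝ) * M ξ ^ (1/2:ℝ) := by
    intro ξ
    have key : ∀ η, {η : EuclideanSpace ℝ (Fin d) | ‖η‖ ≤ c * ‖ξ‖}.indicator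
        (fun η => (‖h η‖₊ : ℝ≥0∞) * (‖g (ξ - η)‖₊ : ℝ≥0∞)) η
        = (wt (s/2) η * (‖h η‖₊ : ℝ≥0∞)) ^ (1/2:ℝ)
          * ({η : EuclideanSpace ℝ (Fin d) | ‖η‖ ≤ c * ‖ξ‖}.indicator
              (fun η => wt (-(s/2)) η * (‖h η‖₊ : ℝ≥0∞) * (‖g (ξ - η)‖₊ : ℝ≥0∞) ^ 2) η) ^ (1/2:ℝ) := by
      intro η
      by_cases hη : η ∈ {η : EuclideanSpace ℝ (Fin d) | ‖η‖ ≤ c * ‖ξ‖}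
      · rw [Set.indicator_of_mem hη, Set.indicator_of_mem hη,
          ← ENNReal.mul_rpow_of_nonneg _ _ (by norm_num : (0:ℝ) ≤ 1/2)]
        have h1 : wt (s/2) η * wt (-(s/2)) η = 1 := by
          rw [wt_mul, show s/2 + -(s/2) = 0 by ring, wt_def, Real.rpow_zero, ENNReal.ofReal_one]
        have harr : wt (s/2) η * (‖h η‖₊ : ℝ≥0∞)
            * (wt (-(s/2)) η * (‖h η‖₊ : ℝ≥0∞) * (‖g (ξ - η)‖₊ : ℝ≥0∞) ^ 2)
            = ((‖h η‖₊ : ℝ≥0∞) * (‖g (ξ - η)‖₊ : ℝ≥0∞)) ^ 2 := by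
          calc wt (s/2) η * (‖h η‖₊ : ℝ≥0∞)
              * (wt (-(s/2)) η * (‖h η‖₊ : ℝ≥0∞) * (‖g (ξ - η)‖₊ : ℝ≥0∞) ^ 2)
              = wt (s/2) η * wt (-(s/2)) η
                * (((‖h η‖₊ : ℝ≥0∞) * (‖g (ξ - η)‖₊ : ℝ≥0∞)) ^ 2) := by ring
            _ = _ := by rw [h1, one_mul]
        rw [harr, ennreal_sqrt_sq]
      · rw [Set.indicator_of_notMem hη, Set.indicator_of_notMem hη,
          ENNReal.zero_rpow_of_pos (by norm_num : (0:ℝ) < 1/2), mul_zero]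
    simp only [hFdef, hLdef, hMdef]
    rw [lintegral_congr key]
    exact ENNReal.lintegral_mul_norm_pow_le ((wt_meas _).mul hameas).aemeasurable
      ((((wt_meas _).mul hameas).mul ((hgmeas ξ).pow_const 2)).indicator (hAmeas ξ)).aemeasurable
      (by norm_num) (by norm_num) (by norm_num)
  -- the key comparison on the cone
  set N : EuclideanSpace ℝ (Fin d) → ℝ≥0∞ := fun ξ =>
    ∫⁻ η, wt (s/2) η * (‖h η‖₊ : ℝ≥0∞) * Q (ξ - η) with hNdef
  have hNmeas : Measurable N := by
    rw [hNdef]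
    exact Measurable.lintegral_prod_right
      ((((wt_meas _).comp measurable_snd).mul (hameas.comp measurable_snd)).mul
        (hQmeas.comp (measurable_fst.sub measurable_snd)))
  have hM2 : ∀ ξ ∈ Γ, wt s ξ * M ξ ≤ ENNReal.ofReal (2 ^ s) * N ξ := by
    intro ξ hξ
    simp only [hMdef, hNdef]
    rw [← lintegral_const_mul' _ _ (wt_ne_top s ξ), ← lintegral_const_mul' _ _
      (ENNReal.ofReal_ne_top (r := 2 ^ s))]
    refine lintegral_mono fun η => ?_
    by_cases hη : η ∈ {η : EuclideanSpace ℝ (Fin d) | ‖η‖ ≤ c * ‖ξ‖}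
    · rw [Set.indicator_of_mem hη]
      have hmem : ξ - η ∈ S := by
        apply hΓ'S
        apply hsub
        exact ⟨ξ, hξ, by simpa [sub_sub_cancel] using hη⟩
      have hQ : Q (ξ - η) = wt s (ξ - η) * (‖g (ξ - η)‖₊ : ℝ≥0∞) ^ 2 := by
        rw [hQdef]; exact Set.indicator_of_mem hmem _
      rw [hQ]
      have h1 : wt s η * wt (-(s/2)) η = wt (s/2) η := by
        rw [wt_mul]; congr 1; ring
      calc wt s ξ * (wt (-(s/2)) η * (‖h η‖₊ : ℝ≥0∞) * (‖g (ξ - η)‖₊ : ℝ≥0∞) ^ 2)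
          ≤ ENNReal.ofReal (2 ^ s) * wt s η * wt s (ξ - η)
            * (wt (-(s/2)) η * (‖h η‖₊ : ℝ≥0∞) * (‖g (ξ - η)‖₊ : ℝ≥0∞) ^ 2) :=
            mul_le_mul_left (wt_peetre hs ξ η) _
        _ = ENNReal.ofReal (2 ^ s) * (wt s η * wt (-(s/2)) η * (‖h η‖₊ : ℝ≥0∞)
            * (wt s (ξ - η) * (‖g (ξ - η)‖₊ : ℝ≥0∞) ^ 2)) := by ring
        _ = ENNReal.ofReal (2 ^ s) * (wt (s/2) η * (‖h η‖₊ : ℝ≥0∞)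
            * (wt s (ξ - η) * (‖g (ξ - η)‖₊ : ℝ≥0∞) ^ 2)) := by rw [h1]
        _ = ENNReal.ofReal (2 ^ s) * (wt (s/2) η * (‖h η‖₊ : ℝ≥0∞)
            * (wt s (ξ - η) * (‖g (ξ - η)‖₊ : ℝ≥0∞) ^ 2)) := rfl
    · rw [Set.indicator_of_notMem hη, mul_zero]
      exact zero_le
  have hNint : ∫⁻ ξ, N ξ = L * K := by
    simp only [hNdef]
    rw [lintegral_lintegral_swap (((((wt_meas _).comp measurable_snd).mul
      (hameas.comp measurable_snd)).mul
      (hQmeas.comp (measurable_fst.sub measurable_snd))).aemeasurable)]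
    have heq : ∀ η, (∫⁻ ξ, wt (s/2) η * (‖h η‖₊ : ℝ≥0∞) * Q (ξ - η))
        = wt (s/2) η * (‖h η‖₊ : ℝ≥0∞) * K := by
      intro η
      rw [lintegral_const_mul' _ _ (ENNReal.mul_ne_top (wt_ne_top _ _) ENNReal.coe_ne_top)]
      congr 1
      rw [hKdef]
      exact (measurePreserving_sub_right volume η).lintegral_comp hQmeas
    rw [lintegral_congr heq, lintegral_mul_const' _ _ hKfin.ne, hLdef]
  -- the far piece
  have hGfar : ∀ ξ, wt ((s + (d:ℝ) + 1)/2) ξ * G ξ ≤ ENNReal.ofReal C₂ * I := by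
    intro ξ
    simp only [hGdef]
    rw [hIW, ← lintegral_const_mul' _ _ (wt_ne_top _ _),
      ← lintegral_const_mul' _ _ (ENNReal.ofReal_ne_top (r := C₂))]
    refine lintegral_mono fun η => ?_
    by_cases hη : η ∈ {η : EuclideanSpace ℝ (Fin d) | ‖η‖ ≤ c * ‖ξ‖}ᶜ
    · rw [Set.indicator_of_mem hη]
      have hfar : c * ‖ξ‖ ≤ ‖η‖ := le_of_lt (not_le.mp (by simpa using hη))
      have h1 : (‖g (ξ - η)‖₊ : ℝ≥0∞)
          ≤ ENNReal.ofReal (C₁ * ((1 + 1/c) ^ m * (1 + ‖η‖ ^ 2) ^ (m/2))) := by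
        rw [show (‖g (ξ - η)‖₊ : ℝ≥0∞) = ENNReal.ofReal ‖g (ξ - η)‖ from (ofReal_norm _).symm]
        refine ENNReal.ofReal_le_ofReal ((hgb _).trans ?_)
        exact mul_le_mul_of_nonneg_left (far_g hc0 (by linarith) hfar) (by linarith)
      have h2 : wt ((s + (d:ℝ) + 1)/2) ξ
          ≤ ENNReal.ofReal (c ^ (-(s + (d:ℝ) + 1)) * (1 + ‖η‖ ^ 2) ^ ((s + (d:ℝ) + 1)/2)) := by
        rw [wt_def]
        exact ENNReal.ofReal_le_ofReal (far_w hc0 hc1 (by linarith) hfar)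
      have hXY : (c ^ (-(s + (d:ℝ) + 1)) * (1 + ‖η‖ ^ 2) ^ ((s + (d:ℝ) + 1)/2))
          * (C₁ * ((1 + 1/c) ^ m * (1 + ‖η‖ ^ 2) ^ (m/2)))
          = C₂ * (1 + ‖η‖ ^ 2) ^ ((s + m + (d:ℝ) + 1)/2) := by
        rw [hC₂def, show (s + m + (d:ℝ) + 1)/2 = (s + (d:ℝ) + 1)/2 + m/2 by ring,
          Real.rpow_add (one_add_sq_pos η)]
        ring
      calc wt ((s + (d:ℝ) + 1)/2) ξ * ((‖h η‖₊ : ℝ≥0∞) * (‖g (ξ - η)‖₊ : ℝ≥0∞))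
          ≤ ENNReal.ofReal (c ^ (-(s + (d:ℝ) + 1)) * (1 + ‖η‖ ^ 2) ^ ((s + (d:ℝ) + 1)/2))
            * ((‖h η‖₊ : ℝ≥0∞) * ENNReal.ofReal (C₁ * ((1 + 1/c) ^ m * (1 + ‖η‖ ^ 2) ^ (m/2)))) :=
            mul_le_mul' h2 (mul_le_mul' le_rfl h1)
        _ = ENNReal.ofReal C₂ * (wt ((s + m + (d:ℝ) + 1)/2) η * (‖h η‖₊ : ℝ≥0∞)) := by
            rw [mul_comm ((‖h η‖₊ : ℝ≥0∞)) (ENNReal.ofReal _), ← mul_assoc,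
              ← ENNReal.ofReal_mul (by positivity), hXY, ENNReal.ofReal_mul hC₂pos.le,
              wt_def, mul_assoc]
    · rw [Set.indicator_of_notMem hη, mul_zero]
      exact zero_le
  have hfarG : ∀ ξ, wt s ξ * G ξ ^ 2 ≤ (ENNReal.ofReal C₂ * I) ^ 2 * wt (-((d:ℝ) + 1)) ξ := by
    intro ξ
    have hsplit : wt s ξ = wt (-((d:ℝ) + 1)) ξ * wt ((s + (d:ℝ) + 1)/2) ξ ^ 2 := by
      rw [sq, wt_mul, wt_mul]; congr 1; ring
    calc wt s ξ * G ξ ^ 2 = wt (-((d:ℝ) + 1)) ξ * (wt ((s + (d:ℝ) + 1)/2) ξ * G ξ) ^ 2 := by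
          rw [hsplit]; ring
      _ ≤ wt (-((d:ℝ) + 1)) ξ * (ENNReal.ofReal C₂ * I) ^ 2 :=
          mul_le_mul_right (pow_le_pow_left' (hGfar ξ) 2) _
      _ = _ := mul_comm _ _
  have hF2 : ∀ ξ ∈ Γ, wt s ξ * F ξ ^ 2 ≤ ENNReal.ofReal (2 ^ s) * (L * N ξ) := by
    intro ξ hξ
    have e1 : F ξ ^ 2 ≤ L * M ξ := by
      calc F ξ ^ 2 ≤ (L ^ (1/2:ℝ) * M ξ ^ (1/2:ℝ)) ^ 2 := by gcongr <;> exact hCS ξ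
        _ = L * M ξ := by rw [mul_pow, ennreal_sq_sqrt, ennreal_sq_sqrt]
    calc wt s ξ * F ξ ^ 2 ≤ wt s ξ * (L * M ξ) := mul_le_mul_right e1 _
      _ = L * (wt s ξ * M ξ) := by ring
      _ ≤ L * (ENNReal.ofReal (2 ^ s) * N ξ) := mul_le_mul_right (hM2 ξ hξ) _
      _ = ENNReal.ofReal (2 ^ s) * (L * N ξ) := by ring
  have hmain : ∀ ξ ∈ Γ, ENNReal.ofReal ((1 + ‖ξ‖ ^ 2) ^ s) * (‖∫ η, h η * g (ξ - η)‖₊ : ℝ≥0∞) ^ 2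
      ≤ 4 * (ENNReal.ofReal (2 ^ s) * (L * N ξ))
        + 4 * ((ENNReal.ofReal C₂ * I) ^ 2 * wt (-((d:ℝ) + 1)) ξ) := by
    intro ξ hξ
    have h1 : (‖∫ η, h η * g (ξ - η)‖₊ : ℝ≥0∞) ^ 2 ≤ 4 * (F ξ ^ 2 + G ξ ^ 2) := by
      calc (‖∫ η, h η * g (ξ - η)‖₊ : ℝ≥0∞) ^ 2 ≤ (F ξ + G ξ) ^ 2 := by
            gcongr <;> exact hconv ξ
        _ ≤ 4 * (F ξ ^ 2 + G ξ ^ 2) := sq_add_le4 _ _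
    have h0 : ENNReal.ofReal ((1 + ‖ξ‖ ^ 2) ^ s) = wt s ξ := rfl
    rw [h0]
    calc wt s ξ * (‖∫ η, h η * g (ξ - η)‖₊ : ℝ≥0∞) ^ 2
        ≤ wt s ξ * (4 * (F ξ ^ 2 + G ξ ^ 2)) := mul_le_mul_right h1 _
      _ = 4 * (wt s ξ * F ξ ^ 2) + 4 * (wt s ξ * G ξ ^ 2) := by ring
      _ ≤ 4 * (ENNReal.ofReal (2 ^ s) * (L * N ξ))
          + 4 * ((ENNReal.ofReal C₂ * I) ^ 2 * wt (-((d:ℝ) + 1)) ξ) :=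
          add_le_add (mul_le_mul_right (hF2 ξ hξ) 4) (mul_le_mul_right (hfarG ξ) 4)
  have hIne : I ≠ ⊤ := hI.ne
  have hLne : L ≠ ⊤ := (hLI.trans_lt hI).ne
  have hRHSmeas : Measurable fun ξ => 4 * (ENNReal.ofReal (2 ^ s) * (L * N ξ))
      + 4 * ((ENNReal.ofReal C₂ * I) ^ 2 * wt (-((d:ℝ) + 1)) ξ) := by
    apply Measurable.add
    · exact ((hNmeas.const_mul L).const_mul (ENNReal.ofReal (2 ^ s))).const_mul 4
    · exact (((wt_meas _).const_mul ((ENNReal.ofReal C₂ * I) ^ 2)).const_mul 4)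
  have hsq : sqIntCone s Γ (fun ξ => ∫ η, h η * g (ξ - η)) ≤ B₀ * I ^ 2 := by
    calc sqIntCone s Γ (fun ξ => ∫ η, h η * g (ξ - η))
        = ∫⁻ ξ in Γ, ENNReal.ofReal ((1 + ‖ξ‖ ^ 2) ^ s)
            * (‖∫ η, h η * g (ξ - η)‖₊ : ℝ≥0∞) ^ 2 := rfl
      _ ≤ ∫⁻ ξ in Γ, (4 * (ENNReal.ofReal (2 ^ s) * (L * N ξ))
            + 4 * ((ENNReal.ofReal C₂ * I) ^ 2 * wt (-((d:ℝ) + 1)) ξ)) :=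
          setLIntegral_mono hRHSmeas hmain
      _ ≤ ∫⁻ ξ, (4 * (ENNReal.ofReal (2 ^ s) * (L * N ξ))
            + 4 * ((ENNReal.ofReal C₂ * I) ^ 2 * wt (-((d:ℝ) + 1)) ξ)) :=
          setLIntegral_le_lintegral _ _
      _ = (4 * (ENNReal.ofReal (2 ^ s) * L)) * (∫⁻ ξ, N ξ)
          + (4 * (ENNReal.ofReal C₂ * I) ^ 2) * J := by
          rw [lintegral_add_left
            (((hNmeas.const_mul L).const_mul (ENNReal.ofReal (2 ^ s))).const_mul 4)]
          congr 1
          · rw [← lintegral_const_mul' _ _ (ENNReal.mul_ne_top (by norm_num)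
              (ENNReal.mul_ne_top ENNReal.ofReal_ne_top hLne))]
            exact lintegral_congr fun ξ => by ring
          · rw [hJdef, ← lintegral_const_mul' _ _ (ENNReal.mul_ne_top (by norm_num)
              (ENNReal.pow_ne_top (ENNReal.mul_ne_top ENNReal.ofReal_ne_top hIne)))]
            exact lintegral_congr fun ξ => by ring
      _ = 4 * ENNReal.ofReal (2 ^ s) * K * (L * L) + 4 * ENNReal.ofReal C₂ ^ 2 * J * (I * I) := by
          rw [hNint]; ring
      _ ≤ 4 * ENNReal.ofReal (2 ^ s) * K * (I * I) + 4 * ENNReal.ofReal C₂ ^ 2 * J * (I * I) := by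
          gcongr <;> exact hLI
      _ = B₀ * I ^ 2 := by rw [hB₀def]; ring
  have hfin : l2Cone s Γ (fun ξ => ∫ η, h η * g (ξ - η)) ≤ B₀ ^ (1/2:ℝ) * I := by
    have hldef : l2Cone s Γ (fun ξ => ∫ η, h η * g (ξ - η))
        = sqIntCone s Γ (fun ξ => ∫ η, h η * g (ξ - η)) ^ (1/2:ℝ) := rfl
    rw [hldef]
    calc sqIntCone s Γ (fun ξ => ∫ η, h η * g (ξ - η)) ^ (1/2:ℝ)
        ≤ (B₀ * I ^ 2) ^ (1/2:ℝ) := ENNReal.rpow_le_rpow hsq (by norm_num)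
      _ = B₀ ^ (1/2:ℝ) * I := by
          rw [ENNReal.mul_rpow_of_nonneg _ _ (by norm_num : (0:ℝ) ≤ 1/2), ennreal_sqrt_sq]
  refine hfin.trans (mul_le_mul_left ?_ I)
  conv_lhs => rw [← ENNReal.ofReal_toReal hB₀top]
  rw [ENNReal.ofReal_rpow_of_nonneg ENNReal.toReal_nonneg (by norm_num)]
  exact ENNReal.ofReal_le_ofReal (le_add_of_nonneg_right zero_le_one)
end
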